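/- arXiv:2107.10032 — 4 statements merged into one kernel-verified Lean document; each statement's English description precedes it below -/
import Mathlib

section
/- Let 𝒢 be a finite graph of groups with finite vertex groups on a finite connected graph Γ, with maximal spanning tree T and orientation Ē(Γ). Let W be a finite-dimensional complex Hilbert space and suppose that for each vertex v ∈ V(Γ) we are given a unitary representation ρ_v: G_v → U(W) such that for every edge e ∈ E(Γ) the G_e-representations ρ_{t(e)}∘i_e and ρ_{o(e)}∘i_ē are unitarily equivalent. Then there exists a unitary representation ρ: π₁(𝒢,T) → U(W) such that for every vertex v the G_v-representation obtained by composing ρ with the natural homomorphism G_v → π₁(𝒢,T) is unitarily equivalent to ρ_v. -/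
open scoped BigOperators

/-- The normalized `p`-Schatten norm of a square complex matrix:
`‖A‖'_p = (tr(|A|^p) / dim W)^(1/p)`, computed via the eigenvalues of `Aᴴ * A`
(whose `p/2`-th powers are the `p`-th powers of the singular values of `A`). -/
noncomputable def schattenNorm (p : ℝ) {ι : Type*} [Fintype ι] [DecidableEq ι]
    (A : Matrix ι ι ℂ) : ℝ :=
  ((∑ i, (Matrix.isHermitian_conjTranspose_mul_self A).eigenvalues i ^ (p / 2)) /
      (Fintype.card ι)) ^ (1 / p)

/-- A finite graph in the sense of Serre: finite sets of vertices and of (oriented)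
edges, a terminus map `t`, and a fixed-point-free involution `e ↦ ē`. The origin of
an edge is defined by `o e = t ē`. -/
structure SerreGraph where
  V : Type
  E : Type
  [fintypeV : Fintype V]
  [fintypeE : Fintype E]
  t : E → V
  bar : E → E
  bar_involutive : Function.Involutive bar
  bar_ne : ∀ e, bar e ≠ e

attribute [instance] SerreGraph.fintypeV SerreGraph.fintypeE

namespace SerreGraph

/-- The origin of an edge: `o e = t ē`. -/
def o (Γ : SerreGraph) (e : Γ.E) : Γ.V := Γ.t (Γ.bar e)

/-- Reachability between vertices using only edges from the subset `Esub`. -/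
def Reaches (Γ : SerreGraph) (Esub : Set Γ.E) : Γ.V → Γ.V → Prop :=
  Relation.ReflTransGen (fun u v => ∃ e ∈ Esub, Γ.o e = u ∧ Γ.t e = v)

/-- The graph is connected. -/
def Connected (Γ : SerreGraph) : Prop := ∀ u v, Γ.Reaches Set.univ u v

/-- `O ⊆ E` is an orientation: it contains exactly one of each pair `{e, ē}`. -/
def IsOrientation (Γ : SerreGraph) (O : Set Γ.E) : Prop :=
  ∀ e, e ∈ O ↔ Γ.bar e ∉ O

/-- `T ⊆ E` is a maximal (= spanning) tree: closed under the involution, connecting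
any two vertices, and with exactly `|V| - 1` geometric edges (each counted twice). -/
def IsSpanningTree (Γ : SerreGraph) (T : Set Γ.E) : Prop :=
  (∀ e ∈ T, Γ.bar e ∈ T) ∧ (∀ u v, Γ.Reaches T u v) ∧
    Nat.card T = 2 * (Fintype.card Γ.V - 1)

end SerreGraph

/-- A finite graph of groups with finite vertex (and edge) groups on the graph `Γ`:
finite groups `Gv v` and `Ge e`, the identification `G_e = G_ē` (an involutive system
of isomorphisms `eqv e : Ge e ≃* Ge ē`), and injective homomorphisms
`i e : Ge e →* Gv (t e)`. -/
structure GraphOfGroups (Γ : SerreGraph) where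
  Gv : Γ.V → Type
  Ge : Γ.E → Type
  [groupGv : ∀ v, Group (Gv v)]
  [fintypeGv : ∀ v, Fintype (Gv v)]
  [groupGe : ∀ e, Group (Ge e)]
  [fintypeGe : ∀ e, Fintype (Ge e)]
  eqv : ∀ e, Ge e ≃* Ge (Γ.bar e)
  eqv_bar : ∀ (e : Γ.E) (g : Ge e),
    eqv (Γ.bar e) (eqv e g) = cast (congrArg Ge (Γ.bar_involutive e)).symm g
  i : ∀ e, Ge e →* Gv (Γ.t e)
  i_inj : ∀ e, Function.Injective (i e)

attribute [instance] GraphOfGroups.groupGv GraphOfGroups.fintypeGv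
  GraphOfGroups.groupGe GraphOfGroups.fintypeGe

namespace GraphOfGroups

variable {Γ : SerreGraph} (𝒢 : GraphOfGroups Γ)

/-- The edge map towards the origin vertex: `i_ē` composed with `G_e = G_ē`. -/
def iBar (e : Γ.E) : 𝒢.Ge e →* 𝒢.Gv (Γ.o e) :=
  (𝒢.i (Γ.bar e)).comp (𝒢.eqv e).toMonoidHom

/-- The group `π̄₁(𝒢,T)`: the free product of the vertex groups with the free group
on the edges of the orientation `O`. -/
def PiBar (O : Set Γ.E) : Type :=
  Monoid.Coprod (Monoid.CoprodI 𝒢.Gv) (FreeGroup O)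

instance (O : Set Γ.E) : Group (𝒢.PiBar O) :=
  inferInstanceAs (Group (Monoid.Coprod (Monoid.CoprodI 𝒢.Gv) (FreeGroup O)))

/-- The canonical embedding of the vertex group `Gv v` into `π̄₁(𝒢,T)`. -/
def vert (O : Set Γ.E) (v : Γ.V) : 𝒢.Gv v →* 𝒢.PiBar O :=
  Monoid.Coprod.inl.comp Monoid.CoprodI.of

/-- The generator `s_e` of `π̄₁(𝒢,T)` corresponding to an oriented edge `e ∈ O`. -/
def edgeGen (O : Set Γ.E) (e : Γ.E) (he : e ∈ O) : 𝒢.PiBar O :=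
  Monoid.Coprod.inr (FreeGroup.of (⟨e, he⟩ : O))

open Classical in
/-- The element `s_e` of `π̄₁(𝒢,T)` for an arbitrary edge: `s_e` for `e` in the
orientation, and `s_ē⁻¹` otherwise. -/
noncomputable def sgen (O : Set Γ.E) (e : Γ.E) : 𝒢.PiBar O :=
  if h : e ∈ O then 𝒢.edgeGen O e h
  else if h' : Γ.bar e ∈ O then (𝒢.edgeGen O (Γ.bar e) h')⁻¹ else 1

/-- The relation set `R_𝒢 ⊆ π̄₁(𝒢,T)`: the generators `s_e` for oriented edges of the
spanning tree `T`, and `s_e⁻¹ i_e(g) s_e (i_ē(g))⁻¹` for all oriented edges `e` and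
`g ∈ G_e`. -/
def Rels (O T : Set Γ.E) : Set (𝒢.PiBar O) :=
  {x | ∃ (e : Γ.E) (he : e ∈ O), e ∈ T ∧ x = 𝒢.edgeGen O e he} ∪
  {x | ∃ (e : Γ.E) (he : e ∈ O) (g : 𝒢.Ge e),
    x = (𝒢.edgeGen O e he)⁻¹ * 𝒢.vert O (Γ.t e) (𝒢.i e g) * 𝒢.edgeGen O e he
        * (𝒢.vert O (Γ.o e) (𝒢.iBar e g))⁻¹}

/-- The generating set `S_𝒢 ⊆ π̄₁(𝒢,T)`: the union of the vertex groups and of the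
generators `s_e`, `e ∈ Ē(Γ)`. -/
def Gens (O : Set Γ.E) : Set (𝒢.PiBar O) :=
  (⋃ v : Γ.V, Set.range (𝒢.vert O v)) ∪
    {x | ∃ (e : Γ.E) (he : e ∈ O), x = 𝒢.edgeGen O e he}

/-- The fundamental group `π₁(𝒢,T)` of the graph of groups: the quotient of
`π̄₁(𝒢,T)` by the normal closure of the relation set `R_𝒢`. -/
def Pi1 (O T : Set Γ.E) : Type :=
  𝒢.PiBar O ⧸ Subgroup.normalClosure (𝒢.Rels O T)

instance (O T : Set Γ.E) : Group (𝒢.Pi1 O T) :=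
  inferInstanceAs (Group (𝒢.PiBar O ⧸ Subgroup.normalClosure (𝒢.Rels O T)))

/-- The natural epimorphism `π̄₁(𝒢,T) → π₁(𝒢,T)`. -/
def proj (O T : Set Γ.E) : 𝒢.PiBar O →* 𝒢.Pi1 O T :=
  QuotientGroup.mk' (Subgroup.normalClosure (𝒢.Rels O T))

/-- `ρ : π̄₁(𝒢,T) → U(n)` is a `δ`-almost `π₁(𝒢,T)`-representation if
`‖ρ(r) - I‖'_p < δ` for every `r ∈ R_𝒢`. -/
def IsAlmostRepG (p : ℝ) (O T : Set Γ.E) (δ : ℝ) {n : ℕ}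
    (ρ : 𝒢.PiBar O →* Matrix.unitaryGroup (Fin n) ℂ) : Prop :=
  ∀ r ∈ 𝒢.Rels O T, schattenNorm p ((ρ r : Matrix (Fin n) (Fin n) ℂ) - 1) < δ

end GraphOfGroups

/-- Two unitary representations of a group on the same space are unitarily
equivalent if some unitary matrix intertwines them. -/
def UnitarilyEquivalent {G : Type*} [Group G] {n : ℕ}
    (ρ₁ ρ₂ : G →* Matrix.unitaryGroup (Fin n) ℂ) : Prop :=
  ∃ U : Matrix.unitaryGroup (Fin n) ℂ,
    ∀ g, (U : Matrix (Fin n) (Fin n) ℂ) * (ρ₁ g : Matrix (Fin n) (Fin n) ℂ)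
      = (ρ₂ g : Matrix (Fin n) (Fin n) ℂ) * (U : Matrix (Fin n) (Fin n) ℂ)

section PotentialAux

/-- Reachability from `r` in exactly `k` steps using edges of `T`. -/
def reachN {V E : Type*} (T : Set E) (t o : E → V) (r : V) : ℕ → V → Prop
  | 0 => fun v => v = r
  | k + 1 => fun v => ∃ e, e ∈ T ∧ t e = v ∧ reachN T t o r k (o e)

lemma reachN_exists {V E : Type*} (T : Set E) (t o : E → V) (r : V) {v : V}
    (h : Relation.ReflTransGen (fun u v => ∃ e ∈ T, o e = u ∧ t e = v) r v) :
    ∃ k, reachN T t o r k v := by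
  induction h with
  | refl => exact ⟨0, rfl⟩
  | tail _ hstep ih =>
      obtain ⟨k, hk⟩ := ih
      obtain ⟨e, heT, hoe, hte⟩ := hstep
      exact ⟨k + 1, e, heT, hte, by rw [hoe]; exact hk⟩

open Classical in
/-- Auxiliary recursion for constructing a potential function along a tree. -/
noncomputable def potAux {V E G : Type*} [Group G] (r : V) (pe : V → E) (o : E → V)
    (U : E → G) : ℕ → V → G
  | 0 => fun _ => 1
  | k + 1 => fun v => if v = r then 1 else (U (pe v))⁻¹ * potAux r pe o U k (o (pe v))

/-- Existence of a potential for a spanning tree: a function `f` on vertices with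
`f (t e) = (U e)⁻¹ * f (o e)` for every tree edge `e`. -/
lemma exists_potential (Γ : SerreGraph) [Nonempty Γ.V] (T : Set Γ.E)
    (hbar : ∀ e ∈ T, Γ.bar e ∈ T)
    (hreach : ∀ u v, Γ.Reaches T u v)
    (hcard : Nat.card T = 2 * (Fintype.card Γ.V - 1))
    {G : Type*} [Group G] (U : Γ.E → G) (hU : ∀ e, U (Γ.bar e) = (U e)⁻¹) :
    ∃ f : Γ.V → G, ∀ e ∈ T, f (Γ.t e) = (U e)⁻¹ * f (Γ.o e) := by
  classical
  rcases isEmpty_or_nonempty Γ.E with hE | hE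
  · exact ⟨fun _ => 1, fun e _ => isEmptyElim e⟩
  set r : Γ.V := Classical.arbitrary Γ.V with hr
  have hex : ∀ v, ∃ k, reachN T Γ.t Γ.o r k v :=
    fun v => reachN_exists T Γ.t Γ.o r (hreach r v)
  set d : Γ.V → ℕ := fun v => Nat.find (hex v) with hd
  have hdspec : ∀ v, reachN T Γ.t Γ.o r (d v) v := fun v => Nat.find_spec (hex v)
  have hdne : ∀ v, v ≠ r → d v ≠ 0 := by
    intro v hv h0
    exact hv (by have := hdspec v; rw [h0] at this; exact this)
  have hstep : ∀ v, v ≠ r →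
      ∃ e, e ∈ T ∧ Γ.t e = v ∧ reachN T Γ.t Γ.o r (d v - 1) (Γ.o e) := by
    intro v hv
    obtain ⟨m, hm⟩ := Nat.exists_eq_succ_of_ne_zero (hdne v hv)
    have := hdspec v
    rw [hm] at this
    obtain ⟨e, heT, hte, hre⟩ := this
    exact ⟨e, heT, hte, by rw [hm]; exact hre⟩
  set pe : Γ.V → Γ.E := fun v =>
    if h : v = r then Classical.arbitrary Γ.E else (hstep v h).choose with hpe
  have peT : ∀ v (hv : v ≠ r), pe v ∈ T := by
    intro v hv; simp only [hpe, dif_neg hv]; exact (hstep v hv).choose_spec.1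
  have pet : ∀ v (hv : v ≠ r), Γ.t (pe v) = v := by
    intro v hv; simp only [hpe, dif_neg hv]; exact (hstep v hv).choose_spec.2.1
  have per : ∀ v (hv : v ≠ r), reachN T Γ.t Γ.o r (d v - 1) (Γ.o (pe v)) := by
    intro v hv; simp only [hpe, dif_neg hv]; exact (hstep v hv).choose_spec.2.2
  have hdo : ∀ v, v ≠ r → d (Γ.o (pe v)) = d v - 1 := by
    intro v hv
    have h1 : d (Γ.o (pe v)) ≤ d v - 1 := Nat.find_le (per v hv)
    have h2 : d v ≤ d (Γ.o (pe v)) + 1 :=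
      Nat.find_le ⟨pe v, peT v hv, pet v hv, hdspec (Γ.o (pe v))⟩
    have h3 := hdne v hv
    omega
  set f : Γ.V → G := fun v => potAux r pe Γ.o U (d v) v with hf
  have key : ∀ v, v ≠ r → f v = (U (pe v))⁻¹ * f (Γ.o (pe v)) := by
    intro v hv
    obtain ⟨m, hm⟩ := Nat.exists_eq_succ_of_ne_zero (hdne v hv)
    have hmo : d (Γ.o (pe v)) = m := by have := hdo v hv; omega
    simp only [hf, hm, potAux, if_neg hv, hmo]
  refine ⟨f, ?_⟩
  -- counting: every edge of `T` is a parent edge or the reverse of one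
  set Vr : Set Γ.V := {v | v ≠ r} with hVr
  set P : Set Γ.E := pe '' Vr ∪ (fun v => Γ.bar (pe v)) '' Vr with hP
  have hPT : P ⊆ T := by
    rintro e (⟨v, hv, rfl⟩ | ⟨v, hv, rfl⟩)
    · exact peT v hv
    · exact hbar _ (peT v hv)
  have hinj1 : Set.InjOn pe Vr := by
    intro v hv w hw h
    rw [← pet v hv, ← pet w hw, h]
  have hinj2 : Set.InjOn (fun v => Γ.bar (pe v)) Vr := by
    intro v hv w hw h
    exact hinj1 hv hw (Γ.bar_involutive.injective h)
  have hdisj : Disjoint (pe '' Vr) ((fun v => Γ.bar (pe v)) '' Vr) := by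
    rw [Set.disjoint_left]
    rintro e ⟨v, hv, rfl⟩ ⟨w, hw, hw2⟩
    -- pe v = bar (pe w)
    have hov : Γ.o (pe v) = Γ.t (pe w) := by
      show Γ.t (Γ.bar (pe v)) = Γ.t (pe w)
      rw [← hw2, Γ.bar_involutive]
    have htv : Γ.t (pe v) = Γ.o (pe w) := by
      show Γ.t (pe v) = Γ.t (Γ.bar (pe w))
      rw [← hw2]
    have e1 : d (Γ.t (pe w)) = d v - 1 := by rw [← hov]; exact hdo v hv
    have e2 : d (Γ.o (pe w)) = d w - 1 := hdo w hw
    rw [pet w hw] at e1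
    rw [← htv, pet v hv] at e2
    have h3 := hdne v hv
    have h4 := hdne w hw
    omega
  have hVrcard : Vr.ncard = Fintype.card Γ.V - 1 := by
    have : Vr = Set.univ \ {r} := by
      ext v; simp [hVr]
    rw [this, Set.ncard_diff (Set.subset_univ _), Set.ncard_univ, Set.ncard_singleton,
      Nat.card_eq_fintype_card]
  have hPcard : P.ncard = 2 * (Fintype.card Γ.V - 1) := by
    rw [hP, Set.ncard_union_eq hdisj, Set.ncard_image_of_injOn hinj1,
      Set.ncard_image_of_injOn hinj2, hVrcard]
    ring
  have hTP : P = T := by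
    apply Set.eq_of_subset_of_ncard_le hPT _ (Set.toFinite T)
    rw [hPcard, ← Nat.card_coe_set_eq, hcard]
  intro e he
  rw [← hTP] at he
  rcases he with ⟨v, hv, rfl⟩ | ⟨v, hv, rfl⟩
  · rw [pet v hv]; exact key v hv
  · have hte : Γ.t (Γ.bar (pe v)) = Γ.o (pe v) := rfl
    have hoe : Γ.o (Γ.bar (pe v)) = v := by
      show Γ.t (Γ.bar (Γ.bar (pe v))) = v
      rw [Γ.bar_involutive]; exact pet v hv
    rw [hte, hoe, hU]
    have := key v hv
    rw [this]
    group

end PotentialAux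

/-- If unitary representations `ρ_v` of the vertex groups of a finite graph of
groups (on a common finite-dimensional space) are compatible along all edges up to
unitary equivalence, then there is a unitary representation of `π₁(𝒢,T)` whose
restriction to each vertex group is unitarily equivalent to `ρ_v`. -/
theorem rep_of_vertex_reps
    (Γ : SerreGraph) (hconn : Γ.Connected) (𝒢 : GraphOfGroups Γ)
    (O T : Set Γ.E) (hO : Γ.IsOrientation O) (hT : Γ.IsSpanningTree T)
    (n : ℕ) (ρv : ∀ v : Γ.V, 𝒢.Gv v →* Matrix.unitaryGroup (Fin n) ℂ)
    (hcompat : ∀ e : Γ.E, UnitarilyEquivalent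
      ((ρv (Γ.t e)).comp (𝒢.i e)) ((ρv (Γ.o e)).comp (𝒢.iBar e))) :
    ∃ ρ : 𝒢.Pi1 O T →* Matrix.unitaryGroup (Fin n) ℂ,
      ∀ v : Γ.V, UnitarilyEquivalent
        (ρ.comp ((𝒢.proj O T).comp (𝒢.vert O v))) (ρv v) := by
  classical
  rcases isEmpty_or_nonempty Γ.V with hV | hV
  · exact ⟨1, fun v => isEmptyElim v⟩
  -- choose intertwiners for all edges, compatible with the involution
  set U : Γ.E → Matrix.unitaryGroup (Fin n) ℂ := fun e =>
    if he : e ∈ O then (hcompat e).choose else ((hcompat (Γ.bar e)).choose)⁻¹ with hUdef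
  have hUbar : ∀ e, U (Γ.bar e) = (U e)⁻¹ := by
    intro e
    by_cases he : e ∈ O
    · have hbe : Γ.bar e ∉ O := (hO e).1 he
      have h3 : Exists.choose (hcompat (Γ.bar (Γ.bar e))) = Exists.choose (hcompat e) :=
        congrArg (fun x => Exists.choose (hcompat x)) (Γ.bar_involutive e)
      simp only [hUdef, dif_neg hbe, dif_pos he]
      rw [h3]
    · have hbe : Γ.bar e ∈ O := not_not.mp (fun h => he ((hO e).2 h))
      simp only [hUdef, dif_pos hbe, dif_neg he, inv_inv]
  have hUint : ∀ e, e ∈ O → ∀ g : 𝒢.Ge e,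
      U e * (ρv (Γ.t e)) (𝒢.i e g) = (ρv (Γ.o e)) (𝒢.iBar e g) * U e := by
    intro e he g
    have := (hcompat e).choose_spec g
    apply Subtype.ext
    simp only [hUdef, dif_pos he]
    push_cast
    simpa using this
  -- find a potential along the spanning tree
  obtain ⟨A, hA⟩ := exists_potential Γ T hT.1 hT.2.1 hT.2.2 U hUbar
  -- the adjusted vertex representations
  set ρ' : ∀ v : Γ.V, 𝒢.Gv v →* Matrix.unitaryGroup (Fin n) ℂ := fun v =>
    ((MulAut.conj (A v)⁻¹).toMonoidHom).comp (ρv v) with hρ'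
  set Φ : 𝒢.PiBar O →* Matrix.unitaryGroup (Fin n) ℂ :=
    Monoid.Coprod.lift (Monoid.CoprodI.lift ρ')
      (FreeGroup.lift fun e : O => (A (Γ.t (e : Γ.E)))⁻¹ * (U (e : Γ.E))⁻¹ *
        A (Γ.o (e : Γ.E))) with hΦ
  have hΦvert : ∀ (v : Γ.V) (g : 𝒢.Gv v),
      Φ (𝒢.vert O v g) = (A v)⁻¹ * (ρv v) g * A v := by
    intro v g
    have h0 : Φ (𝒢.vert O v g) = Monoid.Coprod.lift (Monoid.CoprodI.lift ρ')
        (FreeGroup.lift fun e : O => (A (Γ.t (e : Γ.E)))⁻¹ * (U (e : Γ.E))⁻¹ *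
          A (Γ.o (e : Γ.E))) (Monoid.Coprod.inl (Monoid.CoprodI.of g)) := rfl
    rw [h0, Monoid.Coprod.lift_apply_inl, Monoid.CoprodI.lift_of, hρ']
    simp only [MonoidHom.comp_apply, MulEquiv.coe_toMonoidHom,
      MulAut.conj_apply, inv_inv]
  have hΦedge : ∀ (e : Γ.E) (he : e ∈ O),
      Φ (𝒢.edgeGen O e he) = (A (Γ.t e))⁻¹ * (U e)⁻¹ * A (Γ.o e) := by
    intro e he
    have h0 : Φ (𝒢.edgeGen O e he) = Monoid.Coprod.lift (Monoid.CoprodI.lift ρ')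
        (FreeGroup.lift fun e : O => (A (Γ.t (e : Γ.E)))⁻¹ * (U (e : Γ.E))⁻¹ *
          A (Γ.o (e : Γ.E))) (Monoid.Coprod.inr (FreeGroup.of ⟨e, he⟩)) := rfl
    rw [h0, Monoid.Coprod.lift_apply_inr, FreeGroup.lift_apply_of]
  have hker : 𝒢.Rels O T ⊆ (Φ.ker : Set (𝒢.PiBar O)) := by
    rintro x (⟨e, he, heT, rfl⟩ | ⟨e, he, g, rfl⟩)
    · show Φ _ = 1
      rw [hΦedge e he, hA e heT]
      group
    · show Φ _ = 1
      rw [map_mul, map_mul, map_mul, map_inv, map_inv, hΦedge e he,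
        hΦvert (Γ.t e) (𝒢.i e g), hΦvert (Γ.o e) (𝒢.iBar e g)]
      have hint : (ρv (Γ.t e)) (𝒢.i e g) =
          (U e)⁻¹ * ((ρv (Γ.o e)) (𝒢.iBar e g) * U e) := by
        rw [← hUint e he g]; group
      rw [hint]
      group
  have hle : Subgroup.normalClosure (𝒢.Rels O T) ≤ Φ.ker :=
    Subgroup.normalClosure_le_normal hker
  refine ⟨QuotientGroup.lift _ Φ hle, ?_⟩
  intro v
  refine ⟨A v, ?_⟩
  intro g
  have h1 : (QuotientGroup.lift _ Φ hle).comp ((𝒢.proj O T).comp (𝒢.vert O v)) g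
      = (A v)⁻¹ * (ρv v) g * A v := by
    have h0 : (QuotientGroup.lift _ Φ hle).comp ((𝒢.proj O T).comp (𝒢.vert O v)) g
        = Φ (𝒢.vert O v g) := rfl
    rw [h0]
    exact hΦvert v g
  have h2 : A v * ((QuotientGroup.lift _ Φ hle).comp
      ((𝒢.proj O T).comp (𝒢.vert O v)) g) = (ρv v) g * A v := by
    rw [h1]; group
  calc (A v : Matrix (Fin n) (Fin n) ℂ) *
        ((QuotientGroup.lift _ Φ hle).comp ((𝒢.proj O T).comp (𝒢.vert O v)) g :
          Matrix (Fin n) (Fin n) ℂ)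
      = ((A v * ((QuotientGroup.lift _ Φ hle).comp
          ((𝒢.proj O T).comp (𝒢.vert O v)) g) : Matrix.unitaryGroup (Fin n) ℂ) :
            Matrix (Fin n) (Fin n) ℂ) := by push_cast; ring
    _ = (((ρv v) g * A v : Matrix.unitaryGroup (Fin n) ℂ) :
          Matrix (Fin n) (Fin n) ℂ) := by rw [h2]
    _ = ((ρv v) g : Matrix (Fin n) (Fin n) ℂ) * (A v : Matrix (Fin n) (Fin n) ℂ) := by
          push_cast; ring
end

section
/- Let A and B be finite sets, let w: A → ℤ_{>0} and u: B → ℤ_{>0} be weights defining norms ||x|| = Σ_{a∈A} w(a)·|x(a)| on ℤ^A and ||y|| = Σ_{b∈B} u(b)·|y(b)| on ℤ^B, and let f: ℤ^A → ℤ^B be a ℤ-linear map. Then there exists a constant C > 0 (depending only on A, B, w, u, f) such that for every λ ∈ ℤ^A with λ(a) ≥ 0 for all a ∈ A, there exists λ'' ∈ ℤ^A with λ''(a) ≥ 0 for all a ∈ A, f(λ'') = 0, ||λ − λ''|| ≤ C·||f(λ)||, and ||λ''|| ≤ ||λ||. -/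
open scoped BigOperators
open Filter Topology
set_option linter.unusedSectionVars false
set_option maxHeartbeats 1000000

namespace ConeAux
variable {A B : Type} [Fintype A] [Fintype B]

def fR (M : B → A → ℤ) : (A → ℝ) →ₗ[ℝ] (B → ℝ) where
  toFun x := fun b => ∑ a, (M b a : ℝ) * x a
  map_add' x y := by funext b; simp [mul_add, Finset.sum_add_distrib]
  map_smul' c x := by
    funext b; simp only [RingHom.id_apply, Pi.smul_apply, smul_eq_mul, Finset.mul_sum]
    exact Finset.sum_congr rfl fun a _ => by ring

def fQ (M : B → A → ℤ) : (A → ℚ) →ₗ[ℚ] (B → ℚ) where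
  toFun x := fun b => ∑ a, (M b a : ℚ) * x a
  map_add' x y := by funext b; simp [mul_add, Finset.sum_add_distrib]
  map_smul' c x := by
    funext b; simp only [RingHom.id_apply, Pi.smul_apply, smul_eq_mul, Finset.mul_sum]
    exact Finset.sum_congr rfl fun a _ => by ring

lemma fR_cast (M : B → A → ℤ) (q : A → ℚ) (b : B) :
    fR M (fun a => (q a : ℝ)) b = ((fQ M q b : ℚ) : ℝ) := by
  simp only [fR, fQ, LinearMap.coe_mk, AddHom.coe_mk]
  push_cast
  rfl

lemma span_lemma (M : B → A → ℤ) (S' : Set A) (t : Finset B) :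
    ∀ x : A → ℝ, (∀ a ∉ S', x a = 0) → (∀ b ∈ t, fR M x b = 0) →
    x ∈ Submodule.span ℝ {y : A → ℝ | ∃ q : A → ℚ,
      (∀ a ∉ S', q a = 0) ∧ (∀ b ∈ t, fQ M q b = 0) ∧ y = fun a => (q a : ℝ)} := by
  classical
  induction t using Finset.induction_on with
  | empty =>
    intro x hx _
    have key : x = ∑ a : A, x a • (fun a' => if a' = a then (1:ℝ) else 0) := by
      funext a'
      rw [Finset.sum_apply]
      simp only [Pi.smul_apply, smul_eq_mul, mul_ite, mul_one, mul_zero]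
      rw [Finset.sum_ite_eq Finset.univ a' x]
      simp
    rw [key]
    apply Submodule.sum_mem
    intro a _
    by_cases ha : a ∈ S'
    · apply Submodule.smul_mem
      apply Submodule.subset_span
      refine ⟨fun a' => if a' = a then 1 else 0, ?_, ?_, ?_⟩
      · intro a' ha'
        simp only [ite_eq_right_iff]
        rintro rfl; exact absurd ha ha'
      · intro b hb; exact absurd hb (Finset.notMem_empty b)
      · funext a'; rw [apply_ite (fun q : ℚ => (q : ℝ))]; push_cast; rfl
    · have : x a = 0 := hx a ha
      rw [this, zero_smul]; exact Submodule.zero_mem _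
  | insert b₀ t hb₀ ih =>
    intro x hx hker
    have hx_t : ∀ b ∈ t, fR M x b = 0 := fun b hb => hker b (Finset.mem_insert_of_mem hb)
    have hx0 : fR M x b₀ = 0 := hker b₀ (Finset.mem_insert_self _ _)
    have hmem := ih x hx hx_t
    by_cases hcase : ∀ q : A → ℚ, (∀ a ∉ S', q a = 0) → (∀ b ∈ t, fQ M q b = 0) → fQ M q b₀ = 0
    · refine Submodule.span_mono ?_ hmem
      rintro y ⟨q, h1, h2, rfl⟩
      refine ⟨q, h1, ?_, rfl⟩
      intro b hb
      rcases Finset.mem_insert.1 hb with rfl | hb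
      · exact hcase q h1 h2
      · exact h2 b hb
    · push_neg at hcase
      obtain ⟨q₀, hq₀s, hq₀t, hq₀b⟩ := hcase
      set c₀ : ℚ := fQ M q₀ b₀ with hc₀
      set T : (A → ℝ) →ₗ[ℝ] (A → ℝ) :=
        LinearMap.id - LinearMap.smulRight
          (((c₀ : ℝ))⁻¹ • ((LinearMap.proj b₀).comp (fR M))) (fun a => ((q₀ a : ℝ))) with hT
      have hTapp : ∀ y : A → ℝ, T y = y - ((c₀ : ℝ)⁻¹ * fR M y b₀) • (fun a => ((q₀ a : ℝ))) := by
        intro y; simp [hT]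
      have hTx : T x = x := by
        rw [hTapp, hx0]; simp
      rw [← hTx]
      have h1 : T x ∈ Submodule.map T (Submodule.span ℝ {y : A → ℝ | ∃ q : A → ℚ,
          (∀ a ∉ S', q a = 0) ∧ (∀ b ∈ t, fQ M q b = 0) ∧ y = fun a => (q a : ℝ)}) :=
        Submodule.mem_map_of_mem hmem
      rw [Submodule.map_span] at h1
      refine Submodule.span_le.2 ?_ h1
      rintro _ ⟨y, ⟨q, hqs, hqt, rfl⟩, rfl⟩
      apply Submodule.subset_span
      refine ⟨q - (fQ M q b₀ / c₀) • q₀, ?_, ?_, ?_⟩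
      · intro a ha
        simp [hqs a ha, hq₀s a ha]
      · intro b hb
        rcases Finset.mem_insert.1 hb with rfl | hb
        · rw [map_sub, map_smul]
          simp only [Pi.sub_apply, Pi.smul_apply, smul_eq_mul]
          field_simp
          rw [hc₀]; ring
        · rw [map_sub, map_smul]
          simp only [Pi.sub_apply, Pi.smul_apply, smul_eq_mul, hqt b hb, hq₀t b hb,
            mul_zero, sub_zero]
      · rw [hTapp]
        funext a
        simp only [Pi.sub_apply, Pi.smul_apply, smul_eq_mul, fR_cast]
        push_cast
        ring


/-- From a nonzero nonnegative real kernel vector, get a nonzero nonnegative rational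
kernel vector supported inside its support, positive on the support. -/
lemma exists_rat_kernel (M : B → A → ℤ) (x : A → ℝ) (hx0 : ∀ a, 0 ≤ x a)
    (hker : ∀ b, fR M x b = 0) (hxne : x ≠ 0) :
    ∃ q : A → ℚ, (∀ a, x a = 0 → q a = 0) ∧ (∀ a, x a ≠ 0 → 0 < q a) ∧
      (∀ b, fQ M q b = 0) := by
  classical
  set S' : Set A := {a | x a ≠ 0} with hS'
  have hxmem := span_lemma M S' Finset.univ x
    (fun a ha => by simpa [hS'] using ha) (fun b _ => hker b)
  rw [Submodule.mem_span_set'] at hxmem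
  obtain ⟨n, c, g, hsum⟩ := hxmem
  -- extract rational representatives
  have hgs := fun i => (g i).2
  choose qs hqs1 hqs2 hqs3 using hgs
  -- minimum of x on its support
  have hSne : (Finset.univ.filter fun a => x a ≠ 0).Nonempty := by
    by_contra hco
    apply hxne
    funext a
    rw [Finset.not_nonempty_iff_eq_empty, Finset.filter_eq_empty_iff] at hco
    simpa using hco (Finset.mem_univ a)
  obtain ⟨a₀, ha₀mem, ha₀min⟩ := Finset.exists_min_image _ x hSne
  set m : ℝ := x a₀ with hm
  have hmpos : 0 < m := lt_of_le_of_ne (hx0 a₀) (Ne.symm (by simpa using ha₀mem))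
  set Dr : ℝ := 1 + ∑ i, ∑ a, |((qs i a : ℝ))| with hDr
  have hDrpos : 0 < Dr := by
    have : (0:ℝ) ≤ ∑ i, ∑ a, |((qs i a : ℝ))| :=
      Finset.sum_nonneg fun i _ => Finset.sum_nonneg fun a _ => abs_nonneg _
    linarith
  set ε : ℝ := m / Dr with hε
  have hεpos : 0 < ε := div_pos hmpos hDrpos
  -- rational approximations of the coefficients
  have hra := fun i : Fin n => exists_rat_near (c i) hεpos
  choose rs hrs using hra
  set q : A → ℚ := fun a => ∑ i, rs i * qs i a with hq
  -- the cast of q is close to x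
  have hclose : ∀ a, |(q a : ℝ) - x a| < m := by
    intro a
    have hxa : x a = ∑ i, c i * ((qs i a : ℝ)) := by
      have := congrFun hsum a
      rw [Finset.sum_apply] at this
      rw [← this]
      refine Finset.sum_congr rfl fun i _ => ?_
      have : ((g i : A → ℝ)) = fun a => ((qs i a : ℝ)) := hqs3 i
      rw [this]
      simp
    have hqa : (q a : ℝ) = ∑ i, (rs i : ℝ) * ((qs i a : ℝ)) := by
      rw [hq]; push_cast; rfl
    rw [hqa, hxa, ← Finset.sum_sub_distrib]
    calc |∑ i, ((rs i : ℝ) * (qs i a : ℝ) - c i * (qs i a : ℝ))|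
        ≤ ∑ i, |(rs i : ℝ) * (qs i a : ℝ) - c i * (qs i a : ℝ)| :=
          Finset.abs_sum_le_sum_abs _ _
      _ = ∑ i, |(rs i : ℝ) - c i| * |(qs i a : ℝ)| := by
          refine Finset.sum_congr rfl fun i _ => ?_
          rw [← abs_mul, sub_mul]
      _ ≤ ∑ i, ε * |(qs i a : ℝ)| := by
          refine Finset.sum_le_sum fun i _ => ?_
          refine mul_le_mul_of_nonneg_right ?_ (abs_nonneg _)
          have := hrs i
          rw [abs_sub_comm] at this
          exact le_of_lt this
      _ = ε * ∑ i, |(qs i a : ℝ)| := by rw [Finset.mul_sum]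
      _ ≤ ε * (Dr - 1) := by
          refine mul_le_mul_of_nonneg_left ?_ (le_of_lt hεpos)
          rw [hDr]
          have : ∑ i, |(qs i a : ℝ)| ≤ ∑ i, ∑ a', |(qs i a' : ℝ)| := by
            refine Finset.sum_le_sum fun i _ => ?_
            exact Finset.single_le_sum (fun a' _ => abs_nonneg ((qs i a' : ℝ)))
              (Finset.mem_univ a)
          linarith
      _ < ε * Dr := by
          refine mul_lt_mul_of_pos_left ?_ hεpos
          linarith
      _ = m := by rw [hε]; field_simp
  refine ⟨q, ?_, ?_, ?_⟩
  · intro a ha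
    have : a ∉ S' := by simp [hS', ha]
    rw [hq]
    exact Finset.sum_eq_zero fun i _ => by rw [hqs1 i a this, mul_zero]
  · intro a ha
    have hxa : m ≤ x a := ha₀min a (by simp [ha])
    have := hclose a
    have h2 : x a - m < (q a : ℝ) := by
      have := abs_lt.1 this
      linarith [this.1]
    have : (0:ℝ) < (q a : ℝ) := by linarith
    exact_mod_cast this
  · intro b
    rw [hq]
    have : (fun a => ∑ i, rs i * qs i a) = ∑ i, rs i • qs i := by
      funext a
      rw [Finset.sum_apply]
      rfl
    rw [this, map_sum (fQ M) (fun i => rs i • qs i) Finset.univ, Finset.sum_apply]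
    refine Finset.sum_eq_zero fun i _ => ?_
    rw [map_smul]
    simp [hqs2 i b (Finset.mem_univ b)]

/-- clear denominators: nonzero nonneg integer kernel vector -/
lemma exists_int_kernel (M : B → A → ℤ) (x : A → ℝ) (hx0 : ∀ a, 0 ≤ x a)
    (hker : ∀ b, fR M x b = 0) (hxne : x ≠ 0) :
    ∃ μ : A → ℤ, (∀ a, 0 ≤ μ a) ∧ μ ≠ 0 ∧ (∀ a, x a = 0 → μ a = 0) ∧
      (∀ b, ∑ a, (M b a) * μ a = 0) := by
  classical
  obtain ⟨q, hq0, hqpos, hqker⟩ := exists_rat_kernel M x hx0 hker hxne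
  obtain ⟨d, hd⟩ := IsLocalization.exist_integer_multiples_of_finite
    (nonZeroDivisors ℤ) q
  choose z hz using hd
  have hdne : (d : ℤ) ≠ 0 := nonZeroDivisors.coe_ne_zero d
  set μ : A → ℤ := fun a => (d : ℤ) * z a with hμ
  have hcast : ∀ a, ((μ a : ℤ) : ℚ) = ((d : ℤ) : ℚ)^2 * q a := by
    intro a
    have := hz a
    have hza : ((z a : ℤ) : ℚ) = ((d : ℤ) : ℚ) * q a := by
      rw [show ((z a : ℤ) : ℚ) = algebraMap ℤ ℚ (z a) from rfl, this]
      simp [Algebra.smul_def]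
    rw [hμ]
    push_cast
    rw [hza]
    ring
  have hd2pos : (0:ℚ) < ((d : ℤ) : ℚ)^2 := by
    have : ((d : ℤ) : ℚ) ≠ 0 := Int.cast_ne_zero.2 hdne
    positivity
  have hqnn : ∀ a, 0 ≤ q a := by
    intro a
    by_cases hxa : x a = 0
    · rw [hq0 a hxa]
    · exact le_of_lt (hqpos a hxa)
  refine ⟨μ, ?_, ?_, ?_, ?_⟩
  · intro a
    have : (0:ℚ) ≤ ((μ a : ℤ) : ℚ) := by
      rw [hcast a]; exact mul_nonneg (le_of_lt hd2pos) (hqnn a)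
    exact_mod_cast this
  · -- μ ≠ 0 : pick a with x a ≠ 0
    have : ∃ a, x a ≠ 0 := by
      by_contra hco
      push_neg at hco
      exact hxne (funext hco)
    obtain ⟨a, ha⟩ := this
    intro hco
    have : μ a = 0 := congrFun hco a
    have : ((μ a : ℤ) : ℚ) = 0 := by exact_mod_cast this
    rw [hcast a] at this
    have := hqpos a ha
    nlinarith
  · intro a hxa
    have : ((μ a : ℤ) : ℚ) = 0 := by rw [hcast a, hq0 a hxa, mul_zero]
    exact_mod_cast this
  · intro b
    have : ((∑ a, M b a * μ a : ℤ) : ℚ) = ((d : ℤ) : ℚ)^2 * fQ M q b := by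
      push_cast
      rw [show fQ M q b = ∑ a, (M b a : ℚ) * q a from rfl, Finset.mul_sum]
      refine Finset.sum_congr rfl fun a _ => ?_
      have := hcast a
      push_cast at this
      rw [this]
      ring
    rw [hqker b, mul_zero] at this
    exact_mod_cast this


lemma crux (w : A → ℤ) (u : B → ℤ) (hw : ∀ a, 0 < w a) (hu : ∀ b, 0 < u b)
    (M : B → A → ℤ) :
    ∃ C : ℝ, 0 < C ∧ ∀ r : A → ℤ, (∀ a, 0 ≤ r a) →
      (∀ μ : A → ℤ, (∀ a, 0 ≤ μ a) → (∀ a, μ a ≤ r a) →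
        (∀ b, ∑ a, M b a * μ a = 0) → μ = 0) →
      ((∑ a, w a * r a : ℤ) : ℝ) ≤ C * ((∑ b, u b * |∑ a, M b a * r a| : ℤ) : ℝ) := by
  classical
  by_contra hcon
  push_neg at hcon
  have hseq := fun n : ℕ => hcon ((n : ℝ) + 1) (by positivity)
  choose r hpos hmin hlt using hseq
  set NZ : ℕ → ℝ := fun n => ((∑ a, w a * r n a : ℤ) : ℝ) with hNZ
  set NB : ℕ → ℝ := fun n => ((∑ b, u b * |∑ a, M b a * r n a| : ℤ) : ℝ) with hNB
  have hNB0 : ∀ n, 0 ≤ NB n := by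
    intro n
    have : (0:ℤ) ≤ ∑ b, u b * |∑ a, M b a * r n a| :=
      Finset.sum_nonneg fun b _ => mul_nonneg (le_of_lt (hu b)) (abs_nonneg _)
    simp only [hNB]
    exact_mod_cast this
  have hNZpos : ∀ n, 0 < NZ n := by
    intro n
    have h1 := hlt n
    nlinarith [hNB0 n]
  have hNB1 : ∀ n, 1 ≤ NB n := by
    intro n
    have hfne : ∃ b, (∑ a, M b a * r n a) ≠ 0 := by
      by_contra hco
      push_neg at hco
      have : r n = 0 := hmin n (r n) (hpos n) (fun a => le_refl _) hco
      have : NZ n = 0 := by rw [hNZ]; simp [this]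
      linarith [hNZpos n]
    obtain ⟨b, hb⟩ := hfne
    have h1 : (1:ℤ) ≤ u b * |∑ a, M b a * r n a| := by
      have h2 : (1:ℤ) ≤ |∑ a, M b a * r n a| := Int.one_le_abs (by exact_mod_cast hb)
      have h3 : (1:ℤ) ≤ u b := hu b
      nlinarith
    have : (1:ℤ) ≤ ∑ b, u b * |∑ a, M b a * r n a| := by
      calc (1:ℤ) ≤ u b * |∑ a, M b a * r n a| := h1
        _ ≤ ∑ b, u b * |∑ a, M b a * r n a| :=
          Finset.single_le_sum (fun b' _ => mul_nonneg (le_of_lt (hu b')) (abs_nonneg _))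
            (Finset.mem_univ b)
    simp only [hNB]
    exact_mod_cast this
  have hNZbig : ∀ n : ℕ, (n : ℝ) + 1 < NZ n := by
    intro n
    have := hlt n
    nlinarith [hNB1 n]
  set x : ℕ → A → ℝ := fun n a => (r n a : ℝ) / NZ n with hx
  set Δ : Set (A → ℝ) := {y | (∀ a, 0 ≤ y a) ∧ ∑ a, (w a : ℝ) * y a = 1} with hΔ
  have hxΔ : ∀ n, x n ∈ Δ := by
    intro n
    constructor
    · intro a
      exact div_nonneg (by exact_mod_cast hpos n a) (le_of_lt (hNZpos n))
    · simp only [hx]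
      rw [show (∑ a, (w a : ℝ) * ((r n a : ℝ) / NZ n)) = (∑ a, (w a : ℝ) * (r n a : ℝ)) / NZ n by
        rw [Finset.sum_div]; exact Finset.sum_congr rfl fun a _ => by ring]
      rw [show (∑ a, (w a : ℝ) * (r n a : ℝ)) = NZ n by rw [hNZ]; push_cast; rfl]
      exact div_self (ne_of_gt (hNZpos n))
  have hw1 : ∀ a, (1:ℝ) ≤ (w a : ℝ) := by
    intro a
    have : (1:ℤ) ≤ w a := hw a
    exact_mod_cast this
  have hsub : Δ ⊆ Set.pi Set.univ fun _ : A => Set.Icc (0:ℝ) 1 := by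
    intro y hy a _
    refine ⟨hy.1 a, ?_⟩
    have h1 : (w a : ℝ) * y a ≤ 1 := by
      rw [← hy.2]
      exact Finset.single_le_sum
        (fun a' _ => mul_nonneg (by linarith [hw1 a']) (hy.1 a')) (Finset.mem_univ a)
    calc y a = 1 * y a := (one_mul _).symm
      _ ≤ (w a : ℝ) * y a := mul_le_mul_of_nonneg_right (hw1 a) (hy.1 a)
      _ ≤ 1 := h1
  have hclosed : IsClosed Δ := by
    have h1 : IsClosed {y : A → ℝ | ∀ a, 0 ≤ y a} := by
      rw [Set.setOf_forall]
      exact isClosed_iInter fun a => isClosed_le continuous_const (continuous_apply a)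
    have h2 : IsClosed {y : A → ℝ | ∑ a, (w a : ℝ) * y a = 1} :=
      isClosed_eq (continuous_finset_sum _ fun a _ =>
        continuous_const.mul (continuous_apply a)) continuous_const
    exact h1.inter h2
  have hcomp : IsCompact Δ :=
    IsCompact.of_isClosed_subset (isCompact_univ_pi fun _ => isCompact_Icc) hclosed hsub
  obtain ⟨x₀, hx₀, φ, hφmono, hconv⟩ := hcomp.tendsto_subseq hxΔ
  have hconva : ∀ a, Tendsto (fun n => x (φ n) a) atTop (𝓝 (x₀ a)) := by
    intro a
    exact tendsto_pi_nhds.1 hconv a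
  have hker : ∀ b, fR M x₀ b = 0 := by
    intro b
    have hu1 : (1:ℤ) ≤ u b := hu b
    have hfRx : ∀ n, fR M (x n) b = ((∑ a, M b a * r n a : ℤ) : ℝ) / NZ n := by
      intro n
      have h1 : fR M (x n) b = ∑ a, (M b a : ℝ) * ((r n a : ℝ) / NZ n) := by
        simp only [fR, LinearMap.coe_mk, AddHom.coe_mk, hx]
      rw [h1, show (∑ a, (M b a : ℝ) * ((r n a : ℝ) / NZ n))
          = (∑ a, (M b a : ℝ) * (r n a : ℝ)) / NZ n from by
        rw [Finset.sum_div]; exact Finset.sum_congr rfl fun a _ => by ring]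
      congr 1
      push_cast
      rfl
    have habs : ∀ n, |fR M (x (φ n)) b| ≤ 1 / ((n:ℝ) + 1) := by
      intro n
      rw [hfRx (φ n)]
      rw [abs_div, abs_of_pos (hNZpos (φ n))]
      have hb1 : |((∑ a, M b a * r (φ n) a : ℤ) : ℝ)| ≤ NB (φ n) := by
        have : (|∑ a, M b a * r (φ n) a| : ℤ) ≤ ∑ b', u b' * |∑ a, M b' a * r (φ n) a| := by
          calc (|∑ a, M b a * r (φ n) a| : ℤ)
              ≤ u b * |∑ a, M b a * r (φ n) a| := by nlinarith [abs_nonneg (∑ a, M b a * r (φ n) a)]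
            _ ≤ ∑ b', u b' * |∑ a, M b' a * r (φ n) a| :=
              Finset.single_le_sum (fun b' _ => mul_nonneg (le_of_lt (hu b')) (abs_nonneg _))
                (Finset.mem_univ b)
        rw [← Int.cast_abs]
        simp only [hNB]
        exact_mod_cast this
      have h2 : NB (φ n) / NZ (φ n) < 1 / (((φ n : ℕ) : ℝ) + 1) := by
        rw [div_lt_div_iff₀ (hNZpos (φ n)) (by positivity)]
        have := hlt (φ n)
        nlinarith
      have h3 : 1 / (((φ n : ℕ) : ℝ) + 1) ≤ 1 / ((n:ℝ) + 1) := by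
        apply one_div_le_one_div_of_le (by positivity)
        have : (n:ℝ) ≤ ((φ n : ℕ) : ℝ) := by exact_mod_cast hφmono.le_apply
        linarith
      calc |((∑ a, M b a * r (φ n) a : ℤ) : ℝ)| / NZ (φ n)
          ≤ NB (φ n) / NZ (φ n) := (div_le_div_iff_of_pos_right (hNZpos (φ n))).2 hb1
        _ ≤ 1 / (((φ n : ℕ) : ℝ) + 1) := le_of_lt h2
        _ ≤ 1 / ((n:ℝ) + 1) := h3
    have hcont : Continuous fun y : A → ℝ => fR M y b := by
      have heq : (fun y : A → ℝ => fR M y b) = fun y => ∑ a, (M b a : ℝ) * y a := by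
        funext y; rfl
      rw [heq]
      exact continuous_finset_sum _ fun a _ => continuous_const.mul (continuous_apply a)
    have htend : Tendsto (fun n => fR M (x (φ n)) b) atTop (𝓝 (fR M x₀ b)) :=
      (hcont.tendsto x₀).comp hconv
    have habs' : Tendsto (fun n => |fR M (x (φ n)) b|) atTop (𝓝 |fR M x₀ b|) :=
      (continuous_abs.tendsto _).comp htend
    have h0 : Tendsto (fun n : ℕ => 1 / ((n:ℝ) + 1)) atTop (𝓝 0) :=
      tendsto_one_div_add_atTop_nhds_zero_nat
    have hle : |fR M x₀ b| ≤ 0 := le_of_tendsto_of_tendsto' habs' h0 habs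
    exact abs_nonpos_iff.1 hle
  have hx₀ne : x₀ ≠ 0 := by
    intro hco
    have h2 := hx₀.2
    rw [hco] at h2
    simp at h2
  obtain ⟨μ, hμ0, hμne, hμsupp, hμker⟩ := exists_int_kernel M x₀ hx₀.1 hker hx₀ne
  have hevent : ∀ a : A, ∀ᶠ n in atTop, (μ a : ℝ) ≤ ((r (φ n) a : ℤ) : ℝ) := by
    intro a
    by_cases hxa : x₀ a = 0
    · refine Filter.Eventually.of_forall fun n => ?_
      rw [hμsupp a hxa]
      exact_mod_cast hpos (φ n) a
    · have hpos₀ : 0 < x₀ a := lt_of_le_of_ne (hx₀.1 a) (Ne.symm hxa)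
      have E1 : ∀ᶠ n in atTop, x₀ a / 2 < x (φ n) a :=
        (hconva a).eventually (eventually_gt_nhds (by linarith))
      have E2tend : Tendsto (fun n : ℕ => (x₀ a / 2) * ((n:ℝ) + 1)) atTop atTop :=
        Tendsto.const_mul_atTop (by linarith)
          (tendsto_atTop_add_const_right _ 1 tendsto_natCast_atTop_atTop)
      have E2 : ∀ᶠ n : ℕ in atTop, (μ a : ℝ) ≤ (x₀ a / 2) * ((n:ℝ) + 1) :=
        E2tend.eventually_ge_atTop _
      filter_upwards [E1, E2] with n h1 h2
      have hxnn : 0 ≤ x (φ n) a := (hxΔ (φ n)).1 a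
      have hr : ((r (φ n) a : ℤ) : ℝ) = x (φ n) a * NZ (φ n) := by
        simp only [hx]
        rw [div_mul_cancel₀ _ (ne_of_gt (hNZpos (φ n)))]
      rw [hr]
      calc (μ a : ℝ) ≤ (x₀ a / 2) * ((n:ℝ) + 1) := h2
        _ ≤ x (φ n) a * NZ (φ n) := by
            have h4 : ((n:ℝ)) + 1 ≤ NZ (φ n) := by
              have h5 : ((n:ℝ)) ≤ ((φ n : ℕ) : ℝ) := by exact_mod_cast hφmono.le_apply
              linarith [hNZbig (φ n)]
            exact mul_le_mul (le_of_lt h1) h4 (by positivity) hxnn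
  obtain ⟨n, hn⟩ := (Filter.eventually_all.2 hevent).exists
  have hμle : ∀ a, μ a ≤ r (φ n) a := fun a => by exact_mod_cast hn a
  exact hμne (hmin (φ n) μ hμ0 hμle hμker)

lemma decomp (f : (A → ℤ) →ₗ[ℤ] (B → ℤ)) :
    ∀ (n : ℕ) (lam : A → ℤ), (∀ a, 0 ≤ lam a) → (∑ a, lam a) ≤ n →
    ∃ lam'' : A → ℤ, (∀ a, 0 ≤ lam'' a) ∧ (∀ a, lam'' a ≤ lam a) ∧ f lam'' = 0 ∧
      (∀ μ : A → ℤ, (∀ a, 0 ≤ μ a) → (∀ a, μ a ≤ lam a - lam'' a) → f μ = 0 → μ = 0) := by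
  intro n
  induction n with
  | zero =>
    intro lam hpos hsum
    have h1 : (∑ a, lam a) = 0 :=
      le_antisymm (by exact_mod_cast hsum) (Finset.sum_nonneg fun a _ => hpos a)
    have hzero : ∀ a, lam a = 0 := fun a =>
      (Finset.sum_eq_zero_iff_of_nonneg (fun a _ => hpos a)).1 h1 a (Finset.mem_univ a)
    refine ⟨0, ?_, ?_, map_zero f, ?_⟩
    · intro a; simp
    · intro a; simp [hzero a]
    · intro μ hm1 hm2 _
      funext a
      have h3 := hm2 a
      have h5 := hm1 a
      simp only [Pi.zero_apply] at h3 ⊢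
      rw [hzero a] at h3
      omega
  | succ n ih =>
    intro lam hpos hsum
    by_cases hR : ∀ μ : A → ℤ, (∀ a, 0 ≤ μ a) → (∀ a, μ a ≤ lam a) → f μ = 0 → μ = 0
    · refine ⟨0, fun a => le_refl 0, fun a => hpos a, map_zero f, ?_⟩
      intro μ h1 h2 h3
      exact hR μ h1 (fun a => by have := h2 a; simp only [Pi.zero_apply] at this; omega) h3
    · push_neg at hR
      obtain ⟨μ₀, h1, h2, h3, h4⟩ := hR
      have hμ₀sum : 1 ≤ ∑ a, μ₀ a := by
        have : ∃ a, μ₀ a ≠ 0 := by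
          by_contra hco
          push_neg at hco
          exact h4 (funext hco)
        obtain ⟨a, ha⟩ := this
        calc (1:ℤ) ≤ μ₀ a := by have := h1 a; omega
          _ ≤ ∑ a, μ₀ a := Finset.single_le_sum (fun a' _ => h1 a') (Finset.mem_univ a)
      set lam' : A → ℤ := fun a => lam a - μ₀ a with hlam'
      have hlam'pos : ∀ a, 0 ≤ lam' a := fun a => by have := h2 a; simp only [hlam']; omega
      have hlam'sum : (∑ a, lam' a) ≤ n := by
        simp only [hlam', Finset.sum_sub_distrib]
        omega
      obtain ⟨ν, hν1, hν2, hν3, hν4⟩ := ih lam' hlam'pos hlam'sum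
      refine ⟨fun a => ν a + μ₀ a, ?_, ?_, ?_, ?_⟩
      · intro a
        have hA := hν1 a; have hB := h1 a
        show 0 ≤ ν a + μ₀ a
        omega
      · intro a
        have hA := hν2 a; simp only [hlam'] at hA
        show ν a + μ₀ a ≤ lam a
        omega
      · have : (fun a => ν a + μ₀ a) = ν + μ₀ := rfl
        rw [this, map_add, hν3, h3, add_zero]
      · intro μ hh1 hh2 hh3
        refine hν4 μ hh1 ?_ hh3
        intro a
        have hA := hh2 a
        show μ a ≤ lam' a - ν a
        simp only [hlam'] at hA ⊢
        omega


end ConeAux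

/-- The cone lemma of Lazarovich–Levitt: given finite sets `A, B`, positive integer
weights `w, u` defining weighted `ℓ¹`-norms on `ℤ^A` and `ℤ^B`, and a `ℤ`-linear map
`f : (A → ℤ) →ₗ[ℤ] (B → ℤ)`, there is a constant `C > 0` such that every non-negative `λ ∈ ℤ^A`
admits a non-negative `λ'' ∈ ℤ^A` with `f(λ'') = 0`, `‖λ - λ''‖ ≤ C·‖f(λ)‖` and
`‖λ''‖ ≤ ‖λ‖`. -/
theorem cone_lemma (A B : Type) [Fintype A] [Fintype B]
    (w : A → ℤ) (u : B → ℤ) (hw : ∀ a, 0 < w a) (hu : ∀ b, 0 < u b)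
    (f : (A → ℤ) →ₗ[ℤ] (B → ℤ)) :
    ∃ C : ℝ, 0 < C ∧
      ∀ lam : A → ℤ, (∀ a, 0 ≤ lam a) →
        ∃ lam'' : A → ℤ, (∀ a, 0 ≤ lam'' a) ∧ f lam'' = 0 ∧
          ((∑ a, w a * |lam a - lam'' a| : ℤ) : ℝ)
              ≤ C * ((∑ b, u b * |f lam b| : ℤ) : ℝ) ∧
          (∑ a, w a * |lam'' a|) ≤ (∑ a, w a * |lam a|) := by
  classical
  set M : B → A → ℤ := fun b a => f (fun j => if a = j then 1 else 0) b with hM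
  have hfapp : ∀ (lam : A → ℤ) (b : B), f lam b = ∑ a, M b a * lam a := by
    intro lam b
    have := LinearMap.pi_apply_eq_sum_univ f lam
    rw [this]
    rw [Finset.sum_apply]
    refine Finset.sum_congr rfl fun a _ => ?_
    simp only [Pi.smul_apply, smul_eq_mul, hM]
    ring
  obtain ⟨C, hC, hcrux⟩ := ConeAux.crux w u hw hu M
  refine ⟨C, hC, ?_⟩
  intro lam hlam
  obtain ⟨lam'', h1, h2, h3, h4⟩ :=
    ConeAux.decomp f (∑ a, lam a).toNat lam hlam (Int.self_le_toNat _)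
  refine ⟨lam'', h1, h3, ?_, ?_⟩
  · set r : A → ℤ := fun a => lam a - lam'' a with hr
    have hrpos : ∀ a, 0 ≤ r a := fun a => by simp only [hr]; have := h2 a; omega
    have hfr : ∀ b, (∑ a, M b a * r a) = f lam b := by
      intro b
      have : r = lam - lam'' := rfl
      calc (∑ a, M b a * r a) = f r b := (hfapp r b).symm
        _ = f lam b := by rw [this, map_sub]; simp [h3]
    have hmin : ∀ μ : A → ℤ, (∀ a, 0 ≤ μ a) → (∀ a, μ a ≤ r a) →
        (∀ b, ∑ a, M b a * μ a = 0) → μ = 0 := by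
      intro μ hh1 hh2 hh3
      refine h4 μ hh1 hh2 ?_
      funext b
      rw [hfapp μ b]
      exact hh3 b
    have := hcrux r hrpos hmin
    have heq1 : (∑ a, w a * |lam a - lam'' a|) = ∑ a, w a * r a := by
      refine Finset.sum_congr rfl fun a _ => ?_
      rw [abs_of_nonneg (hrpos a)]
    have heq2 : (∑ b, u b * |∑ a, M b a * r a|) = ∑ b, u b * |f lam b| := by
      refine Finset.sum_congr rfl fun b _ => by rw [hfr b]
    rw [heq1]
    rw [← heq2]
    exact this
  · refine Finset.sum_le_sum fun a _ => ?_
    rw [abs_of_nonneg (h1 a), abs_of_nonneg (hlam a)]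
    exact mul_le_mul_of_nonneg_left (h2 a) (le_of_lt (hw a))
end

section
/- Let 1 ≤ p < ∞ and let G₁ and G₂ be finitely presented groups, each stable with respect to the normalized p-Schatten norm. Then the free product G₁ ∗ G₂ is stable with respect to the normalized p-Schatten norm. -/
open scoped BigOperators

/-- `ρ : F_S → U(n)` is a `δ`-almost `G`-representation for the presentation with
relation set `R` if `‖ρ(r) - I‖'_p < δ` for all `r ∈ R`. -/
def IsAlmostRep (p : ℝ) {S : Type*} (R : Finset (FreeGroup S)) (δ : ℝ)
    {n : ℕ} (ρ : FreeGroup S →* Matrix.unitaryGroup (Fin n) ℂ) : Prop :=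
  ∀ r ∈ R, schattenNorm p ((ρ r : Matrix (Fin n) (Fin n) ℂ) - 1) < δ

/-- Stability of the group `G`, presented via `π : F_S → G` with relation set `R`,
with respect to the normalized `p`-Schatten norm. -/
def PresStable (p : ℝ) {G : Type*} [Group G] {S : Type*}
    (R : Finset (FreeGroup S)) (π : FreeGroup S →* G) : Prop :=
  ∀ ε > (0 : ℝ), ∃ δ > (0 : ℝ),
    ∀ (n : ℕ) (ρ : FreeGroup S →* Matrix.unitaryGroup (Fin n) ℂ),
      IsAlmostRep p R δ ρ →
      ∃ ρ' : G →* Matrix.unitaryGroup (Fin n) ℂ,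
        ∀ s : S, schattenNorm p ((ρ (FreeGroup.of s) : Matrix (Fin n) (Fin n) ℂ)
          - (ρ' (π (FreeGroup.of s)) : Matrix (Fin n) (Fin n) ℂ)) < ε

open scoped Classical in
/-- Stability with respect to the normalized `p`-Schatten norm is preserved by free
products: if `G₁ = ⟨S₁ | R₁⟩` and `G₂ = ⟨S₂ | R₂⟩` are stable, then
`G₁ ∗ G₂ = ⟨S₁ ⊔ S₂ | R₁ ∪ R₂⟩` is stable, for `1 ≤ p < ∞`. -/
theorem free_product_pSchatten_stable (p : ℝ) (hp : 1 ≤ p)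
    (G₁ G₂ : Type) [Group G₁] [Group G₂]
    (S₁ S₂ : Type) [Fintype S₁] [Fintype S₂]
    (R₁ : Finset (FreeGroup S₁)) (R₂ : Finset (FreeGroup S₂))
    (π₁ : FreeGroup S₁ →* G₁) (π₂ : FreeGroup S₂ →* G₂)
    (hsurj₁ : Function.Surjective π₁) (hsurj₂ : Function.Surjective π₂)
    (hker₁ : π₁.ker = Subgroup.normalClosure (R₁ : Set (FreeGroup S₁)))
    (hker₂ : π₂.ker = Subgroup.normalClosure (R₂ : Set (FreeGroup S₂)))
    (hstab₁ : PresStable p R₁ π₁) (hstab₂ : PresStable p R₂ π₂) :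
    PresStable p
      ((R₁.image (FreeGroup.map (Sum.inl : S₁ → S₁ ⊕ S₂))) ∪
        (R₂.image (FreeGroup.map (Sum.inr : S₂ → S₁ ⊕ S₂))))
      (FreeGroup.lift (Sum.elim
        (fun s₁ => (Monoid.Coprod.inl : G₁ →* Monoid.Coprod G₁ G₂) (π₁ (FreeGroup.of s₁)))
        (fun s₂ => (Monoid.Coprod.inr : G₂ →* Monoid.Coprod G₁ G₂) (π₂ (FreeGroup.of s₂))))) := by
  intro ε hε
  obtain ⟨δ₁, hδ₁, h₁⟩ := hstab₁ ε hε
  obtain ⟨δ₂, hδ₂, h₂⟩ := hstab₂ ε hε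
  refine ⟨min δ₁ δ₂, lt_min hδ₁ hδ₂, ?_⟩
  intro n ρ hρ
  obtain ⟨ρ₁', hρ₁'⟩ := h₁ n (ρ.comp (FreeGroup.map Sum.inl)) (fun r hr => by
    have := hρ (FreeGroup.map Sum.inl r)
      (Finset.mem_union_left _ (Finset.mem_image_of_mem _ hr))
    exact lt_of_lt_of_le this (min_le_left _ _))
  obtain ⟨ρ₂', hρ₂'⟩ := h₂ n (ρ.comp (FreeGroup.map Sum.inr)) (fun r hr => by
    have := hρ (FreeGroup.map Sum.inr r)
      (Finset.mem_union_right _ (Finset.mem_image_of_mem _ hr))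
    exact lt_of_lt_of_le this (min_le_right _ _))
  refine ⟨Monoid.Coprod.lift ρ₁' ρ₂', ?_⟩
  rintro (s₁ | s₂)
  · have h := hρ₁' s₁
    simpa using h
  · have h := hρ₂' s₂
    simpa using h
end

section
/- Let 1 ≤ p < ∞, let Ḡ be a group, let N ⊴ Ḡ be a normal subgroup, let G = Ḡ/N and let φ: Ḡ → G be the quotient map. Let S₁, S₂ be finite generating sets of Ḡ and let R₁, R₂ ⊆ Ḡ be finite sets each of which normally generates N. If φ is stable with respect to the normalized p-Schatten norm relative to the pair (S₁, R₁), then φ is stable with respect to the normalized p-Schatten norm relative to the pair (S₂, R₂). -/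
open scoped BigOperators

/-- For `R ⊆ Ḡ` a set normally generating the kernel of `φ : Ḡ → G`, a homomorphism
`ρ : Ḡ → U(n)` is a `δ`-almost `G`-representation if `‖ρ(r) - I‖'_p < δ` for all `r ∈ R`. -/
def IsAlmostRepOf (p : ℝ) {Gbar : Type*} [Group Gbar] (R : Finset Gbar) (δ : ℝ)
    {n : ℕ} (ρ : Gbar →* Matrix.unitaryGroup (Fin n) ℂ) : Prop :=
  ∀ r ∈ R, schattenNorm p ((ρ r : Matrix (Fin n) (Fin n) ℂ) - 1) < δ

/-- Stability of the epimorphism `φ : Ḡ → G` with respect to the normalized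
`p`-Schatten norm, relative to the finite generating set `S` of `Ḡ` and the finite
set `R ⊆ Ḡ` normally generating `ker φ`. -/
def EpiStable (p : ℝ) {Gbar G : Type*} [Group Gbar] [Group G]
    (S R : Finset Gbar) (phi : Gbar →* G) : Prop :=
  ∀ ε > (0 : ℝ), ∃ δ > (0 : ℝ),
    ∀ (n : ℕ) (ρ : Gbar →* Matrix.unitaryGroup (Fin n) ℂ),
      IsAlmostRepOf p R δ ρ →
      ∃ ρ' : G →* Matrix.unitaryGroup (Fin n) ℂ,
        ∀ s ∈ S, schattenNorm p ((ρ s : Matrix (Fin n) (Fin n) ℂ)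
          - (ρ' (phi s) : Matrix (Fin n) (Fin n) ℂ)) < ε

open Matrix

set_option linter.unusedSectionVars false
set_option linter.unusedVariables false
set_option maxHeartbeats 1000000

noncomputable def n2 {ι : Type*} [Fintype ι] [DecidableEq ι] (A : Matrix ι ι ℂ) : ℝ :=
  Real.sqrt ((Matrix.trace (Aᴴ * A)).re / Fintype.card ι)

section N2
variable {ι : Type*} [Fintype ι] [DecidableEq ι]

noncomputable def euc (v : ι → ℂ) : EuclideanSpace ℂ ι := (WithLp.equiv 2 (ι → ℂ)).symm v

lemma norm_euc (v : ι → ℂ) : ‖euc v‖ = Real.sqrt (∑ i, ‖v i‖ ^ 2) := by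
  rw [EuclideanSpace.norm_eq]; rfl

lemma re_star_dot (v : ι → ℂ) : (dotProduct (star v) v).re = ∑ i, ‖v i‖ ^ 2 := by
  simp [dotProduct, Complex.re_sum, Pi.star_apply, Complex.star_def,
    ← Complex.normSq_eq_norm_sq, Complex.normSq_apply,
    Complex.mul_re]

lemma trace_re_eq (A : Matrix ι ι ℂ) :
    (Matrix.trace (Aᴴ * A)).re = ∑ j, ∑ i, ‖A i j‖ ^ 2 := by
  rw [Matrix.trace, Complex.re_sum]
  refine Finset.sum_congr rfl fun j _ => ?_
  have : (Aᴴ * A).diag j = dotProduct (star fun i => A i j) (fun i => A i j) := by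
    simp [Matrix.diag, Matrix.mul_apply, dotProduct, Matrix.conjTranspose_apply]
  rw [this, re_star_dot]

lemma n2_eq_norm (A : Matrix ι ι ℂ) :
    n2 A = ‖euc (fun q : ι × ι => A q.1 q.2)‖ / Real.sqrt (Fintype.card ι) := by
  rw [n2, norm_euc, trace_re_eq]
  have h : (∑ q : ι × ι, ‖A q.1 q.2‖ ^ 2) = ∑ j, ∑ i, ‖A i j‖ ^ 2 := by
    rw [Fintype.sum_prod_type]; exact Finset.sum_comm
  rw [h, Real.sqrt_div (by positivity : (0:ℝ) ≤ ∑ j, ∑ i, ‖A i j‖ ^ 2)]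

lemma n2_nonneg (A : Matrix ι ι ℂ) : 0 ≤ n2 A := Real.sqrt_nonneg _

lemma n2_zero : n2 (0 : Matrix ι ι ℂ) = 0 := by simp [n2]

lemma euc_add (v w : ι → ℂ) : euc (v + w) = euc v + euc w := rfl

lemma n2_add_le (A B : Matrix ι ι ℂ) : n2 (A + B) ≤ n2 A + n2 B := by
  rw [n2_eq_norm, n2_eq_norm, n2_eq_norm, ← add_div, div_eq_mul_inv, div_eq_mul_inv]
  refine mul_le_mul_of_nonneg_right ?_ (by positivity)
  have : (fun q : ι × ι => (A + B) q.1 q.2) = (fun q : ι × ι => A q.1 q.2) + fun q => B q.1 q.2 := rfl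
  rw [this, euc_add]
  exact norm_add_le _ _

lemma n2_neg (A : Matrix ι ι ℂ) : n2 (-A) = n2 A := by
  unfold n2; congr 3; simp

lemma n2_mul_left (U : Matrix.unitaryGroup ι ℂ) (A : Matrix ι ι ℂ) :
    n2 ((U : Matrix ι ι ℂ) * A) = n2 A := by
  have hU : (U : Matrix ι ι ℂ)ᴴ * (U : Matrix ι ι ℂ) = 1 := by
    rw [← Matrix.star_eq_conjTranspose]; exact Matrix.mem_unitaryGroup_iff'.mp U.2
  have key : ((U : Matrix ι ι ℂ) * A)ᴴ * ((U : Matrix ι ι ℂ) * A) = Aᴴ * A := by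
    rw [Matrix.conjTranspose_mul, Matrix.mul_assoc, ← Matrix.mul_assoc _ _ A, hU, Matrix.one_mul]
  rw [n2, key, n2]

lemma n2_mul_right (A : Matrix ι ι ℂ) (U : Matrix.unitaryGroup ι ℂ) :
    n2 (A * (U : Matrix ι ι ℂ)) = n2 A := by
  have hU : (U : Matrix ι ι ℂ) * (U : Matrix ι ι ℂ)ᴴ = 1 := by
    rw [← Matrix.star_eq_conjTranspose]; exact Matrix.mem_unitaryGroup_iff.mp U.2
  have key : (A * (U : Matrix ι ι ℂ))ᴴ * (A * (U : Matrix ι ι ℂ))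
      = (U : Matrix ι ι ℂ)ᴴ * (Aᴴ * A) * (U : Matrix ι ι ℂ) := by
    rw [Matrix.conjTranspose_mul]
    rw [Matrix.mul_assoc, Matrix.mul_assoc, Matrix.mul_assoc]
  have key2 : (((U : Matrix ι ι ℂ)ᴴ * (Aᴴ * A) * (U : Matrix ι ι ℂ))).trace
      = (Aᴴ * A).trace := by
    rw [Matrix.trace_mul_cycle, ← Matrix.mul_assoc, hU, Matrix.one_mul]
  rw [n2, key, key2, n2]

lemma sq_norm_euc (w : ι → ℂ) : ‖euc w‖ ^ 2 = ∑ i, ‖w i‖ ^ 2 := by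
  rw [norm_euc, Real.sq_sqrt (by positivity)]

lemma euc_sub (v w : ι → ℂ) : euc (v - w) = euc v - euc w := rfl

lemma sum_eig_eq_trace {B : Matrix ι ι ℂ} (hB : B.IsHermitian) :
    (∑ i, hB.eigenvalues i) = B.trace.re := by
  have hV : (star (hB.eigenvectorUnitary : Matrix ι ι ℂ)) * (hB.eigenvectorUnitary : Matrix ι ι ℂ)
      = 1 := Matrix.mem_unitaryGroup_iff'.mp (hB.eigenvectorUnitary).2
  have key : B.trace = (Matrix.diagonal (RCLike.ofReal ∘ hB.eigenvalues)).trace := by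
    conv_lhs => rw [hB.spectral_theorem]
    rw [Unitary.conjStarAlgAut_apply, Matrix.trace_mul_cycle, hV, Matrix.one_mul]
  rw [key, Matrix.trace_diagonal, Complex.re_sum]
  simp

lemma quad_form (A : Matrix ι ι ℂ) (v : ι → ℂ) :
    (dotProduct (star v) ((Aᴴ * A) *ᵥ v)).re = ∑ i, ‖(A *ᵥ v) i‖ ^ 2 := by
  rw [← Matrix.mulVec_mulVec, Matrix.dotProduct_mulVec, ← Matrix.star_mulVec, re_star_dot]

lemma sum_sq_unitary_mulVec (W : Matrix.unitaryGroup ι ℂ) (v : ι → ℂ) :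
    ∑ i, ‖((W : Matrix ι ι ℂ) *ᵥ v) i‖ ^ 2 = ∑ i, ‖v i‖ ^ 2 := by
  rw [← quad_form]
  have hW : (W : Matrix ι ι ℂ)ᴴ * (W : Matrix ι ι ℂ) = 1 := by
    rw [← Matrix.star_eq_conjTranspose]; exact Matrix.mem_unitaryGroup_iff'.mp W.2
  rw [hW, Matrix.one_mulVec, re_star_dot]

lemma sum_sq_sub_unitary_le (U V : Matrix.unitaryGroup ι ℂ) (x : ι → ℂ)
    (hx : ∑ j, ‖x j‖ ^ 2 = 1) :
    ∑ j, ‖((((U : Matrix ι ι ℂ) - (V : Matrix ι ι ℂ))) *ᵥ x) j‖ ^ 2 ≤ 4 := by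
  have h2 : (((U : Matrix ι ι ℂ) - (V : Matrix ι ι ℂ))) *ᵥ x
      = (U : Matrix ι ι ℂ) *ᵥ x - (V : Matrix ι ι ℂ) *ᵥ x := Matrix.sub_mulVec _ _ _
  rw [h2, ← sq_norm_euc, euc_sub]
  have hU : ‖euc ((U : Matrix ι ι ℂ) *ᵥ x)‖ ≤ 1 := by
    have h := sq_norm_euc ((U : Matrix ι ι ℂ) *ᵥ x)
    rw [sum_sq_unitary_mulVec, hx] at h
    nlinarith [norm_nonneg (euc ((U : Matrix ι ι ℂ) *ᵥ x))]
  have hV : ‖euc ((V : Matrix ι ι ℂ) *ᵥ x)‖ ≤ 1 := by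
    have h := sq_norm_euc ((V : Matrix ι ι ℂ) *ᵥ x)
    rw [sum_sq_unitary_mulVec, hx] at h
    nlinarith [norm_nonneg (euc ((V : Matrix ι ι ℂ) *ᵥ x))]
  have h3 := norm_sub_le (euc ((U : Matrix ι ι ℂ) *ᵥ x)) (euc ((V : Matrix ι ι ℂ) *ᵥ x))
  nlinarith [norm_nonneg (euc ((U : Matrix ι ι ℂ) *ᵥ x) - euc ((V : Matrix ι ι ℂ) *ᵥ x))]

lemma eig_le_four (U V : Matrix.unitaryGroup ι ℂ) (i : ι) :
    (Matrix.isHermitian_conjTranspose_mul_self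
      ((U : Matrix ι ι ℂ) - (V : Matrix ι ι ℂ))).eigenvalues i ≤ 4 := by
  have hA := Matrix.isHermitian_conjTranspose_mul_self ((U : Matrix ι ι ℂ) - (V : Matrix ι ι ℂ))
  have h1 := hA.eigenvalues_eq i
  rw [RCLike.re_to_complex] at h1
  have hnorm : ∑ x, ‖(hA.eigenvectorBasis i : EuclideanSpace ℂ ι) x‖ ^ 2 = 1 := by
    have hb : ‖hA.eigenvectorBasis i‖ = 1 := hA.eigenvectorBasis.orthonormal.1 i
    rw [EuclideanSpace.norm_eq] at hb
    exact Real.sqrt_eq_one.mp hb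
  calc (Matrix.isHermitian_conjTranspose_mul_self
        ((U : Matrix ι ι ℂ) - (V : Matrix ι ι ℂ))).eigenvalues i
      = (dotProduct (star (hA.eigenvectorBasis i : EuclideanSpace ℂ ι))
        ((((U : Matrix ι ι ℂ) - (V : Matrix ι ι ℂ))ᴴ * ((U : Matrix ι ι ℂ) - (V : Matrix ι ι ℂ)))
          *ᵥ (hA.eigenvectorBasis i : EuclideanSpace ℂ ι))).re := h1
    _ = ∑ j, ‖((((U : Matrix ι ι ℂ) - (V : Matrix ι ι ℂ))) *ᵥ
          (hA.eigenvectorBasis i : EuclideanSpace ℂ ι)) j‖ ^ 2 := quad_form _ _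
    _ ≤ 4 := sum_sq_sub_unitary_le U V _ hnorm

lemma rpow_two_eq (x : ℝ) : x ^ (2:ℝ) = x ^ 2 := by
  rw [show (2:ℝ) = ((2:ℕ):ℝ) by norm_num, Real.rpow_natCast]

lemma n2_sq (A : Matrix ι ι ℂ) :
    n2 A ^ 2 = (∑ i, (Matrix.isHermitian_conjTranspose_mul_self A).eigenvalues i)
      / (Fintype.card ι) := by
  rw [n2, Real.sq_sqrt, sum_eig_eq_trace]
  rw [trace_re_eq]
  positivity

lemma pt_bound {x a b : ℝ} (hx0 : 0 ≤ x) (hx4 : x ≤ 4) (ha : 0 ≤ a) (hb : 0 ≤ b) :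
    x ^ (a + b) ≤ 2 ^ (2*a) * x ^ b := by
  rw [Real.rpow_add_of_nonneg hx0 ha hb]
  refine mul_le_mul_of_nonneg_right ?_ (Real.rpow_nonneg hx0 b)
  calc x ^ a ≤ 4 ^ a := Real.rpow_le_rpow hx0 hx4 ha
    _ = 2 ^ (2*a) := by
        rw [show (4:ℝ) = (2:ℝ) ^ (2:ℝ) by rw [rpow_two_eq]; norm_num,
          ← Real.rpow_mul (by norm_num : (0:ℝ) ≤ 2)]

lemma avg_rpow_le {z : ι → ℝ} (hz : ∀ i, 0 ≤ z i) {q : ℝ} (hq : 1 ≤ q)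
    (hc : 0 < (Fintype.card ι : ℝ)) :
    ((∑ i, z i) / (Fintype.card ι : ℝ)) ^ q
      ≤ (∑ i, (z i) ^ q) / (Fintype.card ι : ℝ) := by
  have h := Real.rpow_arith_mean_le_arith_mean_rpow Finset.univ
    (fun _ : ι => 1 / (Fintype.card ι : ℝ)) z (fun i _ => by positivity)
    (by rw [Finset.sum_const, Finset.card_univ, nsmul_eq_mul]; field_simp)
    (fun i _ => hz i) hq
  have e1 : (∑ i, (1 / (Fintype.card ι : ℝ)) * z i) = (∑ i, z i) / (Fintype.card ι : ℝ) := by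
    rw [← Finset.mul_sum, one_div, inv_mul_eq_div]
  have e2 : (∑ i, (1 / (Fintype.card ι : ℝ)) * z i ^ q)
      = (∑ i, z i ^ q) / (Fintype.card ι : ℝ) := by
    rw [← Finset.mul_sum, one_div, inv_mul_eq_div]
  rw [e1, e2] at h
  exact h

lemma avg_rpow_le_rpow_avg {y : ι → ℝ} (hy : ∀ i, 0 ≤ y i) {θ : ℝ} (hθ0 : 0 < θ) (hθ1 : θ ≤ 1)
    (hc : 0 < (Fintype.card ι : ℝ)) :
    (∑ i, y i ^ θ) / (Fintype.card ι : ℝ) ≤ ((∑ i, y i) / (Fintype.card ι : ℝ)) ^ θ := by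
  have hq : 1 ≤ 1/θ := by rw [le_div_iff₀ hθ0]; linarith
  have h := avg_rpow_le (z := fun i => y i ^ θ) (fun i => Real.rpow_nonneg (hy i) θ) hq hc
  have h2 : ∀ i : ι, (y i ^ θ) ^ (1/θ) = y i := fun i => by
    rw [← Real.rpow_mul (hy i), mul_one_div, div_self (ne_of_gt hθ0), Real.rpow_one]
  simp only [h2] at h
  have hL0 : 0 ≤ (∑ i, y i ^ θ) / (Fintype.card ι : ℝ) := by
    apply div_nonneg _ (le_of_lt hc)
    exact Finset.sum_nonneg fun i _ => Real.rpow_nonneg (hy i) θ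
  calc (∑ i, y i ^ θ) / (Fintype.card ι : ℝ)
      = (((∑ i, y i ^ θ) / (Fintype.card ι : ℝ)) ^ (1/θ)) ^ θ := by
        rw [← Real.rpow_mul hL0, one_div, inv_mul_cancel₀ (ne_of_gt hθ0), Real.rpow_one]
    _ ≤ ((∑ i, y i) / (Fintype.card ι : ℝ)) ^ θ :=
        Real.rpow_le_rpow (Real.rpow_nonneg hL0 _) h (le_of_lt hθ0)

lemma schattenNorm_nonneg {p : ℝ} (A : Matrix ι ι ℂ) : 0 ≤ schattenNorm p A := by
  unfold schattenNorm
  apply Real.rpow_nonneg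
  apply div_nonneg _ (Nat.cast_nonneg _)
  exact Finset.sum_nonneg fun i _ => Real.rpow_nonneg
    (Matrix.eigenvalues_conjTranspose_mul_self_nonneg A i) _

lemma sp_le_n2 {p : ℝ} (hp : 1 ≤ p) (A : Matrix ι ι ℂ)
    (hA4 : ∀ i, (Matrix.isHermitian_conjTranspose_mul_self A).eigenvalues i ≤ 4) :
    schattenNorm p A ≤ 2 * n2 A ^ (min p 2 / p) := by
  have hp0 : (0:ℝ) < p := lt_of_lt_of_le one_pos hp
  have hm1 : (1:ℝ) ≤ min p 2 := le_min hp one_le_two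
  have hm0 : (0:ℝ) < min p 2 := lt_of_lt_of_le one_pos hm1
  have hmp : min p 2 ≤ p := min_le_left _ _
  have hm2 : min p 2 ≤ 2 := min_le_right _ _
  have hlam0 : ∀ i, 0 ≤ (Matrix.isHermitian_conjTranspose_mul_self A).eigenvalues i :=
    Matrix.eigenvalues_conjTranspose_mul_self_nonneg A
  rcases Nat.eq_zero_or_pos (Fintype.card ι) with hc | hc
  · have : IsEmpty ι := Fintype.card_eq_zero_iff.mp hc
    rw [schattenNorm, Finset.univ_eq_empty, Finset.sum_empty, zero_div,
      Real.zero_rpow (one_div_ne_zero (ne_of_gt hp0))]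
    exact mul_nonneg (by norm_num) (Real.rpow_nonneg (n2_nonneg A) _)
  · have hcR : (0:ℝ) < (Fintype.card ι : ℝ) := by exact_mod_cast hc
    set lam := (Matrix.isHermitian_conjTranspose_mul_self A).eigenvalues with hlam
    have pt : ∀ i, lam i ^ (p/2) ≤ 2 ^ (p - min p 2) * lam i ^ (min p 2 / 2) := fun i => by
      calc lam i ^ (p/2) = lam i ^ ((p - min p 2)/2 + (min p 2)/2) := by
            rw [show (p - min p 2)/2 + (min p 2)/2 = p/2 by ring]
        _ ≤ 2 ^ (2*((p - min p 2)/2)) * lam i ^ (min p 2 / 2) :=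
            pt_bound (hlam0 i) (hA4 i) (by linarith) (by linarith)
        _ = 2 ^ (p - min p 2) * lam i ^ (min p 2 / 2) := by
            rw [show 2*((p - min p 2)/2) = p - min p 2 by ring]
    have key1 : (∑ i, lam i ^ (p/2)) / (Fintype.card ι : ℝ)
        ≤ 2 ^ (p - min p 2) * (((∑ i, lam i) / (Fintype.card ι : ℝ)) ^ (min p 2 / 2)) := by
      calc (∑ i, lam i ^ (p/2)) / (Fintype.card ι : ℝ)
          ≤ (∑ i, 2 ^ (p - min p 2) * lam i ^ (min p 2 / 2)) / (Fintype.card ι : ℝ) := by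
            gcongr with i hi
            exact pt i
        _ = 2 ^ (p - min p 2) * ((∑ i, lam i ^ (min p 2 / 2)) / (Fintype.card ι : ℝ)) := by
            rw [← Finset.mul_sum, mul_div_assoc]
        _ ≤ 2 ^ (p - min p 2) * (((∑ i, lam i) / (Fintype.card ι : ℝ)) ^ (min p 2 / 2)) := by
            refine mul_le_mul_of_nonneg_left ?_ (Real.rpow_nonneg (by norm_num) _)
            exact avg_rpow_le_rpow_avg hlam0 (by linarith) (by linarith) hcR
    have havg : (∑ i, lam i) / (Fintype.card ι : ℝ) = n2 A ^ (2:ℝ) := by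
      rw [rpow_two_eq, n2_sq]
    rw [schattenNorm]
    calc ((∑ i, lam i ^ (p/2)) / (Fintype.card ι : ℝ)) ^ (1/p)
        ≤ (2 ^ (p - min p 2) * (((∑ i, lam i) / (Fintype.card ι : ℝ)) ^ (min p 2 / 2))) ^ (1/p) := by
          apply Real.rpow_le_rpow _ key1 (by positivity)
          apply div_nonneg _ (le_of_lt hcR)
          exact Finset.sum_nonneg fun i _ => Real.rpow_nonneg (hlam0 i) _
      _ = (2 ^ (p - min p 2)) ^ (1/p)
            * ((((∑ i, lam i) / (Fintype.card ι : ℝ)) ^ (min p 2 / 2)) ^ (1/p)) := by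
          apply Real.mul_rpow (Real.rpow_nonneg (by norm_num) _)
          exact Real.rpow_nonneg (div_nonneg (Finset.sum_nonneg fun i _ => hlam0 i)
            (le_of_lt hcR)) _
      _ ≤ 2 * n2 A ^ (min p 2 / p) := by
          have f2 : ((((∑ i, lam i) / (Fintype.card ι : ℝ)) ^ (min p 2 / 2)) ^ (1/p))
              = n2 A ^ (min p 2 / p) := by
            rw [havg, ← Real.rpow_mul (n2_nonneg A), ← Real.rpow_mul (n2_nonneg A)]
            congr 1
            field_simp
          rw [f2]
          refine mul_le_mul_of_nonneg_right ?_ (Real.rpow_nonneg (n2_nonneg A) _)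
          calc ((2:ℝ) ^ (p - min p 2)) ^ (1/p) = 2 ^ ((p - min p 2) * (1/p)) := by
                rw [← Real.rpow_mul (by norm_num : (0:ℝ) ≤ 2)]
            _ ≤ 2 ^ (1:ℝ) := by
                apply Real.rpow_le_rpow_of_exponent_le one_le_two
                rw [mul_one_div, div_le_one hp0]
                linarith
            _ = 2 := Real.rpow_one 2

lemma n2_le_sp {p : ℝ} (hp : 1 ≤ p) (A : Matrix ι ι ℂ)
    (hA4 : ∀ i, (Matrix.isHermitian_conjTranspose_mul_self A).eigenvalues i ≤ 4) :
    n2 A ≤ 2 * schattenNorm p A ^ (min p 2 / 2) := by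
  have hp0 : (0:ℝ) < p := lt_of_lt_of_le one_pos hp
  have hm1 : (1:ℝ) ≤ min p 2 := le_min hp one_le_two
  have hm0 : (0:ℝ) < min p 2 := lt_of_lt_of_le one_pos hm1
  have hmp : min p 2 ≤ p := min_le_left _ _
  have hm2 : min p 2 ≤ 2 := min_le_right _ _
  have hlam0 : ∀ i, 0 ≤ (Matrix.isHermitian_conjTranspose_mul_self A).eigenvalues i :=
    Matrix.eigenvalues_conjTranspose_mul_self_nonneg A
  have hsp0 : 0 ≤ schattenNorm p A := schattenNorm_nonneg A
  rcases Nat.eq_zero_or_pos (Fintype.card ι) with hc | hc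
  · have : IsEmpty ι := Fintype.card_eq_zero_iff.mp hc
    have hz : n2 A = 0 := by
      rw [n2, Matrix.trace, Finset.univ_eq_empty, Finset.sum_empty]
      simp
    rw [hz]
    exact mul_nonneg (by norm_num) (Real.rpow_nonneg hsp0 _)
  · have hcR : (0:ℝ) < (Fintype.card ι : ℝ) := by exact_mod_cast hc
    set lam := (Matrix.isHermitian_conjTranspose_mul_self A).eigenvalues with hlam
    have pt : ∀ i, lam i ≤ 2 ^ (2 - min p 2) * lam i ^ (min p 2 / 2) := fun i => by
      calc lam i = lam i ^ ((2 - min p 2)/2 + (min p 2)/2) := by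
            rw [show (2 - min p 2)/2 + (min p 2)/2 = 1 by ring, Real.rpow_one]
        _ ≤ 2 ^ (2*((2 - min p 2)/2)) * lam i ^ (min p 2 / 2) :=
            pt_bound (hlam0 i) (hA4 i) (by linarith) (by linarith)
        _ = 2 ^ (2 - min p 2) * lam i ^ (min p 2 / 2) := by
            rw [show 2*((2 - min p 2)/2) = 2 - min p 2 by ring]
    have hrw : ∀ i, lam i ^ (min p 2 / 2) = (lam i ^ (p/2)) ^ (min p 2 / p) := fun i => by
      rw [← Real.rpow_mul (hlam0 i)]
      congr 1
      field_simp
    have key1 : (∑ i, lam i) / (Fintype.card ι : ℝ)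
        ≤ 2 ^ (2 - min p 2) *
          (((∑ i, lam i ^ (p/2)) / (Fintype.card ι : ℝ)) ^ (min p 2 / p)) := by
      calc (∑ i, lam i) / (Fintype.card ι : ℝ)
          ≤ (∑ i, 2 ^ (2 - min p 2) * lam i ^ (min p 2 / 2)) / (Fintype.card ι : ℝ) := by
            gcongr with i hi
            exact pt i
        _ = 2 ^ (2 - min p 2) * ((∑ i, (lam i ^ (p/2)) ^ (min p 2 / p)) / (Fintype.card ι : ℝ)) := by
            simp only [hrw]
            rw [← Finset.mul_sum, mul_div_assoc]
        _ ≤ 2 ^ (2 - min p 2) *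
            (((∑ i, lam i ^ (p/2)) / (Fintype.card ι : ℝ)) ^ (min p 2 / p)) := by
            refine mul_le_mul_of_nonneg_left ?_ (Real.rpow_nonneg (by norm_num) _)
            refine avg_rpow_le_rpow_avg (fun i => Real.rpow_nonneg (hlam0 i) _) ?_ ?_ hcR
            · positivity
            · rw [div_le_one hp0]; exact hmp
    have hX0 : 0 ≤ (∑ i, lam i ^ (p/2)) / (Fintype.card ι : ℝ) :=
      div_nonneg (Finset.sum_nonneg fun i _ => Real.rpow_nonneg (hlam0 i) _) (le_of_lt hcR)
    have hsp : ((∑ i, lam i ^ (p/2)) / (Fintype.card ι : ℝ)) ^ (min p 2 / p)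
        = schattenNorm p A ^ (min p 2 : ℝ) := by
      rw [schattenNorm, ← Real.rpow_mul hX0]
      congr 1
      field_simp
    have key2 : n2 A ^ 2 ≤ (2 * schattenNorm p A ^ (min p 2 / 2)) ^ 2 := by
      rw [n2_sq]
      have e1 : (2 * schattenNorm p A ^ (min p 2 / 2)) ^ 2
          = 4 * schattenNorm p A ^ (min p 2 : ℝ) := by
        rw [mul_pow, ← rpow_two_eq (schattenNorm p A ^ (min p 2 / 2)), ← Real.rpow_mul hsp0]
        rw [show min p 2 / 2 * 2 = min p 2 by ring]
        norm_num
      rw [e1]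
      calc (∑ i, lam i) / (Fintype.card ι : ℝ)
          ≤ 2 ^ (2 - min p 2) *
            (((∑ i, lam i ^ (p/2)) / (Fintype.card ι : ℝ)) ^ (min p 2 / p)) := key1
        _ ≤ 4 * schattenNorm p A ^ (min p 2 : ℝ) := by
            rw [hsp]
            refine mul_le_mul_of_nonneg_right ?_ (Real.rpow_nonneg hsp0 _)
            calc (2:ℝ) ^ (2 - min p 2) ≤ 2 ^ (1:ℝ) :=
                  Real.rpow_le_rpow_of_exponent_le one_le_two (by linarith)
              _ ≤ 4 := by rw [Real.rpow_one]; norm_num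
    have h2 : 0 ≤ 2 * schattenNorm p A ^ (min p 2 / 2) :=
      mul_nonneg (by norm_num) (Real.rpow_nonneg hsp0 _)
    exact (pow_le_pow_iff_left₀ (n2_nonneg A) h2 (by norm_num)).mp key2

lemma sp_lt_of_n2_le {p : ℝ} (hp : 1 ≤ p) {ε : ℝ} (hε : 0 < ε) (A : Matrix ι ι ℂ)
    (hA4 : ∀ i, (Matrix.isHermitian_conjTranspose_mul_self A).eigenvalues i ≤ 4)
    (h : n2 A ≤ (ε/4) ^ (p / min p 2)) : schattenNorm p A < ε := by
  have hp0 : (0:ℝ) < p := lt_of_lt_of_le one_pos hp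
  have hm0 : (0:ℝ) < min p 2 := lt_of_lt_of_le one_pos (le_min hp one_le_two)
  calc schattenNorm p A ≤ 2 * n2 A ^ (min p 2 / p) := sp_le_n2 hp A hA4
    _ ≤ 2 * ((ε/4) ^ (p / min p 2)) ^ (min p 2 / p) := by
        refine mul_le_mul_of_nonneg_left ?_ (by norm_num)
        exact Real.rpow_le_rpow (n2_nonneg A) h (by positivity)
    _ = ε / 2 := by
        rw [← Real.rpow_mul (by positivity : (0:ℝ) ≤ ε/4)]
        rw [show p / min p 2 * (min p 2 / p) = 1 by field_simp, Real.rpow_one]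
        ring
    _ < ε := by linarith

lemma n2_lt_of_sp_le {p : ℝ} (hp : 1 ≤ p) {ε : ℝ} (hε : 0 < ε) (A : Matrix ι ι ℂ)
    (hA4 : ∀ i, (Matrix.isHermitian_conjTranspose_mul_self A).eigenvalues i ≤ 4)
    (h : schattenNorm p A ≤ (ε/4) ^ (2 / min p 2)) : n2 A < ε := by
  have hp0 : (0:ℝ) < p := lt_of_lt_of_le one_pos hp
  have hm0 : (0:ℝ) < min p 2 := lt_of_lt_of_le one_pos (le_min hp one_le_two)
  calc n2 A ≤ 2 * schattenNorm p A ^ (min p 2 / 2) := n2_le_sp hp A hA4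
    _ ≤ 2 * ((ε/4) ^ (2 / min p 2)) ^ (min p 2 / 2) := by
        refine mul_le_mul_of_nonneg_left ?_ (by norm_num)
        exact Real.rpow_le_rpow (schattenNorm_nonneg A) h (by positivity)
    _ = ε / 2 := by
        rw [← Real.rpow_mul (by positivity : (0:ℝ) ≤ ε/4)]
        rw [show 2 / min p 2 * (min p 2 / 2) = 1 by field_simp, Real.rpow_one]
        ring
    _ < ε := by linarith

end N2

section Unitary
variable {ι : Type*} [Fintype ι] [DecidableEq ι]

local notation "𝕌" => Matrix.unitaryGroup ι ℂ
local notation "𝕄" => Matrix ι ι ℂ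

lemma ucoe_mul (u v : 𝕌) : ((u * v : 𝕌) : 𝕄) = (u : 𝕄) * (v : 𝕄) := rfl

lemma ucoe_one : ((1 : 𝕌) : 𝕄) = 1 := rfl

lemma ucoe_inv_mul (u : 𝕌) : ((u⁻¹ : 𝕌) : 𝕄) * (u : 𝕄) = 1 := by
  rw [← ucoe_mul, inv_mul_cancel, ucoe_one]

lemma ucoe_mul_inv (u : 𝕌) : (u : 𝕄) * ((u⁻¹ : 𝕌) : 𝕄) = 1 := by
  rw [← ucoe_mul, mul_inv_cancel, ucoe_one]

lemma n2_mul_sub_mul (u v w x : 𝕌) :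
    n2 (((u * v : 𝕌) : 𝕄) - ((w * x : 𝕌) : 𝕄)) ≤ n2 ((u : 𝕄) - (w : 𝕄)) + n2 ((v : 𝕄) - (x : 𝕄)) := by
  have e : ((u * v : 𝕌) : 𝕄) - ((w * x : 𝕌) : 𝕄)
      = (u : 𝕄) * ((v : 𝕄) - (x : 𝕄)) + ((u : 𝕄) - (w : 𝕄)) * (x : 𝕄) := by
    rw [ucoe_mul, ucoe_mul]
    noncomm_ring
  rw [e]
  calc n2 ((u : 𝕄) * ((v : 𝕄) - (x : 𝕄)) + ((u : 𝕄) - (w : 𝕄)) * (x : 𝕄))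
      ≤ n2 ((u : 𝕄) * ((v : 𝕄) - (x : 𝕄))) + n2 (((u : 𝕄) - (w : 𝕄)) * (x : 𝕄)) := n2_add_le _ _
    _ = n2 ((v : 𝕄) - (x : 𝕄)) + n2 ((u : 𝕄) - (w : 𝕄)) := by rw [n2_mul_left, n2_mul_right]
    _ = n2 ((u : 𝕄) - (w : 𝕄)) + n2 ((v : 𝕄) - (x : 𝕄)) := by ring
  
lemma n2_inv_sub_inv (u v : 𝕌) :
    n2 (((u⁻¹ : 𝕌) : 𝕄) - ((v⁻¹ : 𝕌) : 𝕄)) = n2 ((u : 𝕄) - (v : 𝕄)) := by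
  have e : ((u⁻¹ : 𝕌) : 𝕄) - ((v⁻¹ : 𝕌) : 𝕄)
      = ((u⁻¹ : 𝕌) : 𝕄) * (-(((u : 𝕄) - (v : 𝕄)) * ((v⁻¹ : 𝕌) : 𝕄))) := by
    have h1 := ucoe_inv_mul u
    have h2 := ucoe_mul_inv v
    have expand : ((u⁻¹ : 𝕌) : 𝕄) * (-(((u : 𝕄) - (v : 𝕄)) * ((v⁻¹ : 𝕌) : 𝕄)))
        = - (((u⁻¹ : 𝕌) : 𝕄) * (u : 𝕄)) * ((v⁻¹ : 𝕌) : 𝕄)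
          + ((u⁻¹ : 𝕌) : 𝕄) * ((v : 𝕄) * ((v⁻¹ : 𝕌) : 𝕄)) := by noncomm_ring
    rw [expand, h1, h2, mul_one]
    noncomm_ring
  rw [e, n2_mul_left, n2_neg, n2_mul_right]

lemma n2_conj_sub_one (w u : 𝕌) :
    n2 (((w * u * w⁻¹ : 𝕌) : 𝕄) - 1) = n2 ((u : 𝕄) - 1) := by
  have e : ((w * u * w⁻¹ : 𝕌) : 𝕄) - 1
      = (w : 𝕄) * (((u : 𝕄) - 1) * ((w⁻¹ : 𝕌) : 𝕄)) := by
    have h2 := ucoe_mul_inv w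
    rw [ucoe_mul, ucoe_mul]
    have expand : (w : 𝕄) * (((u : 𝕄) - 1) * ((w⁻¹ : 𝕌) : 𝕄))
        = (w : 𝕄) * (u : 𝕄) * ((w⁻¹ : 𝕌) : 𝕄) - (w : 𝕄) * ((w⁻¹ : 𝕌) : 𝕄) := by noncomm_ring
    rw [expand, h2]
  rw [e, n2_mul_left, n2_mul_right]

lemma eig4_sub (u v : 𝕌) (i : ι) :
    (Matrix.isHermitian_conjTranspose_mul_self ((u : 𝕄) - (v : 𝕄))).eigenvalues i ≤ 4 :=
  eig_le_four u v i

lemma eig4_sub_one (u : 𝕌) (i : ι) :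
    (Matrix.isHermitian_conjTranspose_mul_self ((u : 𝕄) - 1)).eigenvalues i ≤ 4 := by
  have := eig_le_four u 1 i
  rwa [ucoe_one] at this

end Unitary

section GroupInd
variable {Gbar G : Type} [Group Gbar] [Group G]

lemma gen_const (S : Finset Gbar) (phi : Gbar →* G) {g : Gbar}
    (hg : g ∈ Subgroup.closure (S : Set Gbar)) :
    ∃ C : ℝ, 0 ≤ C ∧ ∀ (n : ℕ) (ρ : Gbar →* Matrix.unitaryGroup (Fin n) ℂ)
      (ρ' : G →* Matrix.unitaryGroup (Fin n) ℂ) (e : ℝ), 0 ≤ e →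
      (∀ s ∈ S, n2 ((ρ s : Matrix (Fin n) (Fin n) ℂ)
        - (ρ' (phi s) : Matrix (Fin n) (Fin n) ℂ)) ≤ e) →
      n2 ((ρ g : Matrix (Fin n) (Fin n) ℂ)
        - (ρ' (phi g) : Matrix (Fin n) (Fin n) ℂ)) ≤ C * e := by
  refine Subgroup.closure_induction ?_ ?_ ?_ ?_ hg
  · intro x hx
    exact ⟨1, zero_le_one, fun n ρ ρ' e he hb => by
      rw [one_mul]; exact hb x hx⟩
  · refine ⟨0, le_refl _, fun n ρ ρ' e he hb => ?_⟩
    rw [_root_.map_one, _root_.map_one, _root_.map_one, zero_mul, sub_self, n2_zero]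
  · rintro x y hx hy ⟨Cx, hCx0, hCx⟩ ⟨Cy, hCy0, hCy⟩
    refine ⟨Cx + Cy, by linarith, fun n ρ ρ' e he hb => ?_⟩
    rw [_root_.map_mul, _root_.map_mul, _root_.map_mul]
    calc n2 (((ρ x * ρ y : Matrix.unitaryGroup (Fin n) ℂ) : Matrix (Fin n) (Fin n) ℂ)
          - ((ρ' (phi x) * ρ' (phi y) : Matrix.unitaryGroup (Fin n) ℂ) : Matrix (Fin n) (Fin n) ℂ))
        ≤ n2 ((ρ x : Matrix (Fin n) (Fin n) ℂ) - (ρ' (phi x) : Matrix (Fin n) (Fin n) ℂ))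
          + n2 ((ρ y : Matrix (Fin n) (Fin n) ℂ) - (ρ' (phi y) : Matrix (Fin n) (Fin n) ℂ)) :=
          n2_mul_sub_mul _ _ _ _
      _ ≤ Cx * e + Cy * e := add_le_add (hCx n ρ ρ' e he hb) (hCy n ρ ρ' e he hb)
      _ = (Cx + Cy) * e := by ring
  · rintro x hx ⟨C, hC0, hC⟩
    refine ⟨C, hC0, fun n ρ ρ' e he hb => ?_⟩
    rw [_root_.map_inv, _root_.map_inv, _root_.map_inv]
    rw [n2_inv_sub_inv]
    exact hC n ρ ρ' e he hb

lemma rel_const (R : Finset Gbar) {g : Gbar}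
    (hg : g ∈ Subgroup.normalClosure (R : Set Gbar)) :
    ∃ C : ℝ, 0 ≤ C ∧ ∀ (n : ℕ) (ρ : Gbar →* Matrix.unitaryGroup (Fin n) ℂ) (d : ℝ), 0 ≤ d →
      (∀ r ∈ R, n2 ((ρ r : Matrix (Fin n) (Fin n) ℂ) - 1) ≤ d) →
      n2 ((ρ g : Matrix (Fin n) (Fin n) ℂ) - 1) ≤ C * d := by
  refine Subgroup.closure_induction ?_ ?_ ?_ ?_ hg
  · intro x hx
    obtain ⟨r, hr, hconj⟩ := Group.mem_conjugatesOfSet_iff.mp hx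
    obtain ⟨c, hc⟩ := isConj_iff.mp hconj
    refine ⟨1, zero_le_one, fun n ρ d hd hb => ?_⟩
    rw [one_mul, ← hc]
    have e1 : ρ (c * r * c⁻¹) = ρ c * ρ r * (ρ c)⁻¹ := by rw [_root_.map_mul, _root_.map_mul, _root_.map_inv]
    rw [e1, n2_conj_sub_one]
    exact hb r hr
  · refine ⟨0, le_refl _, fun n ρ d hd hb => ?_⟩
    rw [_root_.map_one, zero_mul]
    have : ((1 : Matrix.unitaryGroup (Fin n) ℂ) : Matrix (Fin n) (Fin n) ℂ) = 1 := rfl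
    rw [this, sub_self, n2_zero]
  · rintro x y hx hy ⟨Cx, hCx0, hCx⟩ ⟨Cy, hCy0, hCy⟩
    refine ⟨Cx + Cy, by linarith, fun n ρ d hd hb => ?_⟩
    rw [_root_.map_mul]
    have h := n2_mul_sub_mul (ρ x) (ρ y) (1 : Matrix.unitaryGroup (Fin n) ℂ) 1
    rw [mul_one, ucoe_one] at h
    calc n2 (((ρ x * ρ y : Matrix.unitaryGroup (Fin n) ℂ) : Matrix (Fin n) (Fin n) ℂ) - 1)
        ≤ n2 ((ρ x : Matrix (Fin n) (Fin n) ℂ) - 1) + n2 ((ρ y : Matrix (Fin n) (Fin n) ℂ) - 1) := h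
      _ ≤ Cx * d + Cy * d := add_le_add (hCx n ρ d hd hb) (hCy n ρ d hd hb)
      _ = (Cx + Cy) * d := by ring
  · rintro x hx ⟨C, hC0, hC⟩
    refine ⟨C, hC0, fun n ρ d hd hb => ?_⟩
    rw [_root_.map_inv]
    have h := n2_inv_sub_inv (ρ x) (1 : Matrix.unitaryGroup (Fin n) ℂ)
    rw [inv_one, ucoe_one] at h
    rw [h]
    exact hC n ρ d hd hb

end GroupInd


/-- Stability of the epimorphism `φ : Ḡ → G = Ḡ/N` with respect to the normalized
`p`-Schatten norm is independent of the choice of the finite generating set `S` of `Ḡ`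
and of the finite set `R` normally generating `N`. -/
theorem epiStable_well_defined (p : ℝ) (hp : 1 ≤ p)
    (Gbar : Type) [Group Gbar] (N : Subgroup Gbar) [N.Normal]
    (S₁ S₂ R₁ R₂ : Finset Gbar)
    (hS₁ : Subgroup.closure (S₁ : Set Gbar) = ⊤)
    (hS₂ : Subgroup.closure (S₂ : Set Gbar) = ⊤)
    (hR₁ : Subgroup.normalClosure (R₁ : Set Gbar) = N)
    (hR₂ : Subgroup.normalClosure (R₂ : Set Gbar) = N)
    (h : EpiStable p S₁ R₁ (QuotientGroup.mk' N)) :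
    EpiStable p S₂ R₂ (QuotientGroup.mk' N) := by
  intro ε hε
  have hm0 : (0:ℝ) < min p 2 := lt_of_lt_of_le one_pos (le_min hp one_le_two)
  -- constants for expressing S₂ in terms of S₁
  have hgen : ∀ s : Gbar, s ∈ S₂ →
      ∃ C : ℝ, 0 ≤ C ∧ ∀ (n : ℕ) (ρ : Gbar →* Matrix.unitaryGroup (Fin n) ℂ)
      (ρ' : Gbar ⧸ N →* Matrix.unitaryGroup (Fin n) ℂ) (e : ℝ), 0 ≤ e →
      (∀ s' ∈ S₁, n2 ((ρ s' : Matrix (Fin n) (Fin n) ℂ)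
        - (ρ' (QuotientGroup.mk' N s') : Matrix (Fin n) (Fin n) ℂ)) ≤ e) →
      n2 ((ρ s : Matrix (Fin n) (Fin n) ℂ)
        - (ρ' (QuotientGroup.mk' N s) : Matrix (Fin n) (Fin n) ℂ)) ≤ C * e := by
    intro s _
    exact gen_const S₁ (QuotientGroup.mk' N) (by rw [hS₁]; trivial)
  choose! fS hfS0 hfS using hgen
  set CS : ℝ := (∑ s ∈ S₂, fS s) + 1 with hCS_def
  have hCS0 : 0 < CS := by
    have : 0 ≤ ∑ s ∈ S₂, fS s := Finset.sum_nonneg fun s hs => hfS0 s hs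
    linarith
  have hCSle : ∀ s ∈ S₂, fS s ≤ CS := by
    intro s hs
    have := Finset.single_le_sum (f := fS) (fun i hi => hfS0 i hi) hs
    linarith
  -- epsilon chain
  set ε₁ : ℝ := (ε/4) ^ (p / min p 2) with hε₁_def
  have hε₁0 : 0 < ε₁ := Real.rpow_pos_of_pos (by linarith) _
  set ε₂ : ℝ := ε₁ / CS with hε₂_def
  have hε₂0 : 0 < ε₂ := div_pos hε₁0 hCS0
  set ε₃ : ℝ := (ε₂/4) ^ (2 / min p 2) with hε₃_def
  have hε₃0 : 0 < ε₃ := Real.rpow_pos_of_pos (by linarith) _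
  obtain ⟨δ₁, hδ₁0, hstab⟩ := h ε₃ hε₃0
  -- constants for expressing R₁ inside normal closure of R₂
  have hrel : ∀ r : Gbar, r ∈ R₁ →
      ∃ C : ℝ, 0 ≤ C ∧ ∀ (n : ℕ) (ρ : Gbar →* Matrix.unitaryGroup (Fin n) ℂ) (d : ℝ), 0 ≤ d →
      (∀ r' ∈ R₂, n2 ((ρ r' : Matrix (Fin n) (Fin n) ℂ) - 1) ≤ d) →
      n2 ((ρ r : Matrix (Fin n) (Fin n) ℂ) - 1) ≤ C * d := by
    intro r hr
    refine rel_const R₂ ?_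
    rw [hR₂, ← hR₁]
    exact Subgroup.subset_normalClosure (by exact_mod_cast hr)
  choose! fR hfR0 hfR using hrel
  set CR : ℝ := (∑ r ∈ R₁, fR r) + 1 with hCR_def
  have hCR0 : 0 < CR := by
    have : 0 ≤ ∑ r ∈ R₁, fR r := Finset.sum_nonneg fun r hr => hfR0 r hr
    linarith
  have hCRle : ∀ r ∈ R₁, fR r ≤ CR := by
    intro r hr
    have := Finset.single_le_sum (f := fR) (fun i hi => hfR0 i hi) hr
    linarith
  set δ₂ : ℝ := (δ₁/4) ^ (p / min p 2) / CR with hδ₂_def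
  have hδ₂0 : 0 < δ₂ := div_pos (Real.rpow_pos_of_pos (by linarith) _) hCR0
  refine ⟨(δ₂/4) ^ (2 / min p 2), Real.rpow_pos_of_pos (by linarith) _, ?_⟩
  intro n ρ halmost
  -- Step 1: n2 bounds on R₂
  have step1 : ∀ r ∈ R₂, n2 ((ρ r : Matrix (Fin n) (Fin n) ℂ) - 1) ≤ δ₂ := by
    intro r hr
    exact le_of_lt (n2_lt_of_sp_le hp hδ₂0 _ (eig4_sub_one (ρ r))
      (le_of_lt (halmost r hr)))
  -- Step 2-3: ρ is δ₁-almost rep rel R₁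
  have step3 : IsAlmostRepOf p R₁ δ₁ ρ := by
    intro r hr
    have h2 : n2 ((ρ r : Matrix (Fin n) (Fin n) ℂ) - 1) ≤ (δ₁/4) ^ (p / min p 2) := by
      calc n2 ((ρ r : Matrix (Fin n) (Fin n) ℂ) - 1) ≤ fR r * δ₂ :=
            hfR r hr n ρ δ₂ (le_of_lt hδ₂0) step1
        _ ≤ CR * δ₂ := mul_le_mul_of_nonneg_right (hCRle r hr) (le_of_lt hδ₂0)
        _ = (δ₁/4) ^ (p / min p 2) := by
            rw [hδ₂_def, mul_div_cancel₀ _ (ne_of_gt hCR0)]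
    exact sp_lt_of_n2_le hp hδ₁0 _ (eig4_sub_one (ρ r)) h2
  obtain ⟨ρ', hρ'⟩ := hstab n ρ step3
  refine ⟨ρ', ?_⟩
  intro s hs
  -- Step 5: n2 bounds on S₁
  have step5 : ∀ s' ∈ S₁, n2 ((ρ s' : Matrix (Fin n) (Fin n) ℂ)
      - (ρ' (QuotientGroup.mk' N s') : Matrix (Fin n) (Fin n) ℂ)) ≤ ε₂ := by
    intro s' hs'
    exact le_of_lt (n2_lt_of_sp_le hp hε₂0 _ (eig4_sub (ρ s') (ρ' (QuotientGroup.mk' N s')))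
      (le_of_lt (hρ' s' hs')))
  -- Step 6-7
  have step6 : n2 ((ρ s : Matrix (Fin n) (Fin n) ℂ)
      - (ρ' (QuotientGroup.mk' N s) : Matrix (Fin n) (Fin n) ℂ)) ≤ ε₁ := by
    calc n2 ((ρ s : Matrix (Fin n) (Fin n) ℂ)
        - (ρ' (QuotientGroup.mk' N s) : Matrix (Fin n) (Fin n) ℂ)) ≤ fS s * ε₂ :=
          hfS s hs n ρ ρ' ε₂ (le_of_lt hε₂0) step5
      _ ≤ CS * ε₂ := mul_le_mul_of_nonneg_right (hCSle s hs) (le_of_lt hε₂0)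
      _ = ε₁ := by rw [hε₂_def, mul_div_cancel₀ _ (ne_of_gt hCS0)]
  exact sp_lt_of_n2_le hp hε _ (eig4_sub (ρ s) (ρ' (QuotientGroup.mk' N s))) step6
end
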